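/- arXiv:2303.10889 — 2 statements merged into one kernel-verified Lean document; each statement's English description precedes it below -/
import Mathlib

section
/- Let D be a multidimensional hybrid domain on ≺ with respect to thresholds x̲ and x̄, and let s ∈ M satisfy x̲^s = x̄^s. Then for every n ≥ 2, a marginal SCF f^s : ([D]^s)^n → A^s is a strategy-proof unanimous marginal rule if and only if it is a fixed ballot rule (FBR) on ≺^s. -/
noncomputable section

universe u

/-- A (strict) preference: a complete, antisymmetric, transitive binary relation,
i.e. a strict linear order, on `α`.  `rel a b` reads "`a` is strictly preferred to `b`". -/
structure Pref (α : Type u) : Type u where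
  rel : α → α → Prop
  asymm : ∀ a b, rel a b → ¬ rel b a
  trans : ∀ a b c, rel a b → rel b c → rel a c
  total : ∀ a b, a ≠ b → rel a b ∨ rel b a

namespace Pref

variable {α : Type u}

theorem exists_top [Finite α] [Nonempty α] (P : Pref α) :
    ∃ a : α, ∀ b, b ≠ a → P.rel a b := by
  haveI : IsTrans α P.rel := ⟨P.trans⟩
  haveI : IsIrrefl α P.rel := ⟨fun a h => P.asymm a a h h⟩
  obtain ⟨a, -, ha⟩ :=
    (Finite.wellFounded_of_trans_of_irrefl P.rel).has_min Set.univ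
      ⟨Classical.arbitrary α, trivial⟩
  refine ⟨a, fun b hb => ?_⟩
  rcases P.total a b (fun h => hb h.symm) with h | h
  · exact h
  · exact absurd h (ha b trivial)

/-- The top-ranked alternative `r₁(P)` of a preference. -/
def top [Finite α] [Nonempty α] (P : Pref α) : α := P.exists_top.choose

theorem top_spec [Finite α] [Nonempty α] (P : Pref α) :
    ∀ b, b ≠ P.top → P.rel P.top b := P.exists_top.choose_spec

/-- `rank P a = k` means that `a` is the `k`-th ranked alternative `r_k(P)`. -/
def rank (P : Pref α) (a : α) : ℕ := {b | P.rel b a}.ncard + 1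

/-- The induced marginal preference `[P]^s` on component `s`:
derived from `P` by referring to the off-`s` components of the top alternative. -/
def marg {m : ℕ} {A : Fin m → Type u} [∀ s, Fintype (A s)] [∀ s, Nonempty (A s)]
    (P : Pref (∀ s, A s)) (s : Fin m) : Pref (A s) where
  rel x y := P.rel (Function.update P.top s x) (Function.update P.top s y)
  asymm _ _ h := P.asymm _ _ h
  trans _ _ _ h₁ h₂ := P.trans _ _ _ h₁ h₂
  total x y hxy := P.total _ _ fun h => hxy (by
    have := congrFun h s
    simpa using this)

end Pref

section SocialChoice

variable {m : ℕ} {A : Fin m → Type u}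

/-- `a` and `b` are similar, differing exactly in component `s`: `M(a,b) = {s}`. -/
def SimilarAt (a b : ∀ s, A s) (s : Fin m) : Prop :=
  a s ≠ b s ∧ ∀ t, t ≠ s → a t = b t

/-- The "slice" `(A^s, x^{-s})` of alternatives agreeing with `x` off component `s`. -/
def Slice (s : Fin m) (x : ∀ t, A t) : Set (∀ t, A t) :=
  {a | ∀ t, t ≠ s → a t = x t}

variable [∀ s, Fintype (A s)] [∀ s, Nonempty (A s)]

/-- The induced marginal domain `[D]^s`. -/
def margDomain (D : Set (Pref (∀ s, A s))) (s : Fin m) : Set (Pref (A s)) :=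
  (fun P => Pref.marg P s) '' D

/-- A preference is minimal-richness witnessed: every alternative is some preference's top. -/
def MinimallyRich (D : Set (Pref (∀ s, A s))) : Prop :=
  ∀ a : ∀ s, A s, ∃ P ∈ D, Pref.top P = a

/-- A separable preference. -/
def Separable (P : Pref (∀ s, A s)) : Prop :=
  ∃ Q : ∀ s, Pref (A s), ∀ (s : Fin m) (a b : ∀ t, A t),
    SimilarAt a b s → (Q s).rel (a s) (b s) → P.rel a b

/-- A top-separable preference. -/
def TopSeparable (P : Pref (∀ s, A s)) : Prop :=
  ∀ (s : Fin m) (a b : ∀ t, A t), SimilarAt a b s → a s = Pref.top P s → P.rel a b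

end SocialChoice

/-- Two preferences are complete reversals. -/
def CompleteReversals {α : Type u} (P P' : Pref α) : Prop :=
  ∀ a b, P.rel a b ↔ P'.rel b a

section SCFProps

variable {β : Type u}

/-- Unanimity of a (marginal) social choice function on domain `E`. -/
def Unanimous [Finite β] [Nonempty β] (E : Set (Pref β)) {n : ℕ}
    (f : (Fin n → E) → β) : Prop :=
  ∀ (p : Fin n → E) (a : β), (∀ i, Pref.top (p i).1 = a) → f p = a

/-- Strategy-proofness of a (marginal) social choice function on domain `E`. -/
def StrategyProof (E : Set (Pref β)) {n : ℕ} (f : (Fin n → E) → β) : Prop :=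
  ∀ (p : Fin n → E) (i : Fin n) (Q : E),
    f p ≠ f (Function.update p i Q) →
    (p i).1.rel (f p) (f (Function.update p i Q))

/-- The tops-only property. -/
def TopsOnly [Finite β] [Nonempty β] (E : Set (Pref β)) {n : ℕ}
    (f : (Fin n → E) → β) : Prop :=
  ∀ p p' : Fin n → E, (∀ i, Pref.top (p i).1 = Pref.top (p' i).1) → f p = f p'

end SCFProps

section Decomp

variable {m : ℕ} {A : Fin m → Type u} [∀ s, Fintype (A s)] [∀ s, Nonempty (A s)]

/-- The profile of induced marginal preferences `([P₁]^s, …, [Pₙ]^s)`. -/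
def margProfile (D : Set (Pref (∀ s, A s))) (s : Fin m) {n : ℕ}
    (p : Fin n → D) : Fin n → (margDomain D s) :=
  fun i => ⟨Pref.marg (p i).1 s, ⟨(p i).1, (p i).2, rfl⟩⟩

/-- `f` is decomposed by the family of marginal SCFs `g`. -/
def Decomposable (D : Set (Pref (∀ s, A s))) {n : ℕ}
    (f : (Fin n → D) → (∀ s, A s))
    (g : ∀ s : Fin m, (Fin n → (margDomain D s)) → A s) : Prop :=
  ∀ p : Fin n → D, ∀ s, f p s = g s (margProfile D s p)

/-- A decomposable domain: for every `n ≥ 2` and every SCF, being a strategy-proof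
unanimous rule is equivalent to being decomposable into strategy-proof unanimous
marginal rules. -/
def DecomposableDomain (D : Set (Pref (∀ s, A s))) : Prop :=
  ∀ n : ℕ, 2 ≤ n → ∀ f : (Fin n → D) → (∀ s, A s),
    (Unanimous D f ∧ StrategyProof D f) ↔
      ∃ g : ∀ s : Fin m, (Fin n → (margDomain D s)) → A s,
        Decomposable D f g ∧
        ∀ s, Unanimous (margDomain D s) (g s) ∧ StrategyProof (margDomain D s) (g s)

/-- Diversity⁺: `D` contains two separable preferences that are complete reversals. -/
def DiversityPlus (D : Set (Pref (∀ s, A s))) : Prop :=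
  ∃ P ∈ D, ∃ P' ∈ D, Separable P ∧ Separable P' ∧ CompleteReversals P P'

end Decomp

/-- Adjacency of two preferences: they coincide except that two alternatives ranked
consecutively in `P` occupy the same two positions in reversed order in `P'`. -/
def Adjacent {β : Type u} (P P' : Pref β) : Prop :=
  ∃ a b : β, a ≠ b ∧
    P.rank b = P.rank a + 1 ∧ P'.rank b = P.rank a ∧ P'.rank a = P.rank a + 1 ∧
    ∀ c, c ≠ a → c ≠ b → P.rank c = P'.rank c

section AdjPlus

variable {m : ℕ} {A : Fin m → Type u} [∀ s, Fintype (A s)] [∀ s, Nonempty (A s)]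

/-- Adjacency⁺ of two (separable) preferences. -/
def AdjacentPlus (P P' : Pref (∀ s, A s)) : Prop :=
  Separable P ∧ Separable P' ∧
  ∃ (s : Fin m) (a b : A s), a ≠ b ∧
    (∀ z : ∀ t, A t,
      P.rank (Function.update z s b) = P.rank (Function.update z s a) + 1 ∧
      P'.rank (Function.update z s b) = P.rank (Function.update z s a) ∧
      P'.rank (Function.update z s a) = P.rank (Function.update z s a) + 1) ∧
    ∀ c : ∀ t, A t, c s ≠ a → c s ≠ b → P.rank c = P'.rank c

/-- Edges of the graph `G_{~/~⁺}`: adjacency or adjacency⁺. -/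
def AdjEdge (P P' : Pref (∀ s, A s)) : Prop :=
  Adjacent P P' ∨ AdjacentPlus P P'

end AdjPlus

/-- A path in a graph with edge relation `edge` and vertex set `S`, connecting `x` to `y`. -/
def IsPath {β : Type u} (edge : β → β → Prop) (S : Set β) (x y : β)
    (l : List β) : Prop :=
  2 ≤ l.length ∧ l.Nodup ∧ l.head? = some x ∧ l.getLast? = some y ∧
    (∀ z ∈ l, z ∈ S) ∧ List.Chain' edge l

/-- A path of preferences has `{a,b}`-restoration if the relative ranking of `a` and `b`
flips more than once along the path. -/
def HasRestoration {β : Type u} (l : List (Pref β)) (a b : β) : Prop :=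
  ∃ o p q : Fin l.length, o < p ∧ p < q ∧
    (((l.get o).rel a b ∧ (l.get p).rel b a ∧ (l.get q).rel a b) ∨
     ((l.get o).rel b a ∧ (l.get p).rel a b ∧ (l.get q).rel b a))

section RichDom

variable {m : ℕ} {A : Fin m → Type u} [∀ s, Fintype (A s)] [∀ s, Nonempty (A s)]

/-- The Interior⁺ property. -/
def InteriorPlus (D : Set (Pref (∀ s, A s))) : Prop :=
  ∀ P ∈ D, ∀ P' ∈ D, P ≠ P' → Pref.top P = Pref.top P' →
    ∃ l : List (Pref (∀ s, A s)),
      IsPath AdjEdge D P P' l ∧ ∀ Q ∈ l, Pref.top Q = Pref.top P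

/-- The Exterior⁺ property (including the no-detour condition). -/
def ExteriorPlus (D : Set (Pref (∀ s, A s))) : Prop :=
  ∀ P ∈ D, ∀ P' ∈ D, Pref.top P ≠ Pref.top P' →
    (∀ a b : ∀ s, A s, ∃ l : List (Pref (∀ s, A s)),
        IsPath AdjEdge D P P' l ∧ ¬ HasRestoration l a b) ∧
    ∀ s : Fin m, SimilarAt (Pref.top P) (Pref.top P') s →
      ∃ l : List (Pref (∀ s, A s)),
        IsPath AdjEdge D P P' l ∧ ∀ Q ∈ l, ∀ t, t ≠ s → Pref.top Q t = Pref.top P t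

/-- A rich domain: minimally rich, diversity⁺, Interior⁺ and Exterior⁺. -/
def RichDomain (D : Set (Pref (∀ s, A s))) : Prop :=
  MinimallyRich D ∧ DiversityPlus D ∧ InteriorPlus D ∧ ExteriorPlus D

end RichDom

/-- The weak interval `⟨x,y⟩` w.r.t. a linear order. -/
def wInterval {β : Type u} (lin : LinearOrder β) (x y : β) : Set β :=
  {z | (lin.le x z ∧ lin.le z y) ∨ (lin.le y z ∧ lin.le z x)}

/-- The strict (open) interval `Int⟨x,y⟩` w.r.t. a linear order. -/
def sInterval {β : Type u} (lin : LinearOrder β) (x y : β) : Set β :=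
  {z | (lin.lt x z ∧ lin.lt z y) ∨ (lin.lt y z ∧ lin.lt z x)}

/-- `x` and `y` are marginal thresholds w.r.t. `lin`. -/
def MarginalThresholds {β : Type u} (lin : LinearOrder β) (x y : β) : Prop :=
  x = y ∨ (x ≠ y ∧ 3 ≤ (wInterval lin x y).ncard)

/-- `x` and `y` are strongly connected in the marginal domain `E`: `x ≈ y`. -/
def StronglyConnected {β : Type u} (E : Set (Pref β)) (x y : β) : Prop :=
  ∃ Q ∈ E, ∃ Q' ∈ E,
    Pref.rank Q x = 1 ∧ Pref.rank Q y = 2 ∧ Pref.rank Q' y = 1 ∧ Pref.rank Q' x = 2 ∧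
    ∀ z, z ≠ x → z ≠ y → Pref.rank Q z = Pref.rank Q' z

/-- Edges of the graph `G_≈`. -/
def scEdge {β : Type u} (E : Set (Pref β)) (x y : β) : Prop :=
  x ≠ y ∧ StronglyConnected E x y

/-- The graph with edge relation `edge` on vertex set `B` is connected. -/
def GraphConnectedOn {β : Type u} (edge : β → β → Prop) (B : Set β) : Prop :=
  ∀ x ∈ B, ∀ y ∈ B, x ≠ y → ∃ l : List β, IsPath edge B x y l

/-- `v` is a leaf of the graph with edge relation `edge` on vertex set `B`:
it has a unique neighbor. -/
def IsLeaf {β : Type u} (edge : β → β → Prop) (B : Set β) (v : β) : Prop :=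
  v ∈ B ∧ ∃! w, w ∈ B ∧ edge v w

/-- A hybrid marginal preference on `lin` w.r.t. marginal thresholds `ylo`, `yhi`. -/
def HybridPref {β : Type u} [Finite β] [Nonempty β] (lin : LinearOrder β)
    (ylo yhi : β) (Q : Pref β) : Prop :=
  ∀ a b : β, a ≠ b → a ∈ sInterval lin (Pref.top Q) b →
    a ∉ sInterval lin ylo yhi → Q.rel a b

section MDH

variable {m : ℕ} {A : Fin m → Type u} [∀ s, Fintype (A s)] [∀ s, Nonempty (A s)]

/-- `xlo` and `xhi` are thresholds: marginal thresholds on every component. -/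
def Thresholds (prec : ∀ s, LinearOrder (A s)) (xlo xhi : ∀ s, A s) : Prop :=
  ∀ s, MarginalThresholds (prec s) (xlo s) (xhi s)

/-- A multidimensional hybrid preference on `≺ = ∏ prec s` w.r.t. thresholds `xlo`, `xhi`. -/
def MDHybrid (prec : ∀ s, LinearOrder (A s)) (xlo xhi : ∀ s, A s)
    (P : Pref (∀ s, A s)) : Prop :=
  ∀ (s : Fin m) (a b : ∀ t, A t), SimilarAt a b s →
    (a s = Pref.top P s → P.rel a b) ∧
    (a s ∈ sInterval (prec s) (Pref.top P s) (b s) →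
      a s ∉ sInterval (prec s) (xlo s) (xhi s) → P.rel a b)

/-- A multidimensional single-peaked preference on `≺ = ∏ prec s`. -/
def MSP (prec : ∀ s, LinearOrder (A s)) (P : Pref (∀ s, A s)) : Prop :=
  ∀ (s : Fin m) (a b : ∀ t, A t), SimilarAt a b s →
    a s ∈ wInterval (prec s) (Pref.top P s) (b s) → P.rel a b

/-- A multidimensional hybrid domain on `≺` w.r.t. thresholds `xlo`, `xhi`. -/
def MDHybridDomain (D : Set (Pref (∀ s, A s))) (prec : ∀ s, LinearOrder (A s))
    (xlo xhi : ∀ s, A s) : Prop :=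
  Thresholds prec xlo xhi ∧
  (∀ P ∈ D, MDHybrid prec xlo xhi P) ∧
  ∀ s, GraphConnectedOn (scEdge (margDomain D s)) Set.univ ∧
    (xlo s ≠ xhi s →
      ∀ v, ¬ IsLeaf (scEdge (margDomain D s)) (wInterval (prec s) (xlo s) (xhi s)) v)

/-- Strong connectedness⁺ of two alternatives: `a ≈⁺ b`. -/
def SCPlus (D : Set (Pref (∀ s, A s))) (a b : ∀ s, A s) : Prop :=
  ∃ P ∈ D, ∃ P' ∈ D, Pref.top P = a ∧ Pref.top P' = b ∧ AdjacentPlus P P'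

end MDH

/-- The outcome of the fixed-ballot formula
`max_{J ⊆ N} ( min_{i ∈ J} ( r₁(Qᵢ), b_J ) )`. -/
def fbrValue {β : Type u} (lin : LinearOrder β) {n : ℕ} [Fintype β]
    (bal : Finset (Fin n) → β) (tops : Fin n → β) : β :=
  letI := lin
  letI : DecidableEq β := lin.toDecidableEq
  Finset.univ.sup' ⟨∅, Finset.mem_univ _⟩
    fun J : Finset (Fin n) =>
      (insert (bal J) (J.image tops)).inf' (Finset.insert_nonempty _ _) id

/-- Fixed ballots: ballot unanimity and monotonicity. -/
def FBRBallots {β : Type u} [Fintype β] [Nonempty β] (lin : LinearOrder β) {n : ℕ}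
    (bal : Finset (Fin n) → β) : Prop :=
  bal ∅ = @Finset.min' β lin Finset.univ Finset.univ_nonempty ∧
  bal Finset.univ = @Finset.max' β lin Finset.univ Finset.univ_nonempty ∧
  ∀ J J' : Finset (Fin n), J ⊂ J' → lin.le (bal J) (bal J')

/-- A fixed ballot rule (FBR) on the linear order `lin`. -/
def IsFBR {β : Type u} [Fintype β] [Nonempty β] (lin : LinearOrder β)
    (E : Set (Pref β)) {n : ℕ} (f : (Fin n → E) → β) : Prop :=
  ∃ bal : Finset (Fin n) → β, FBRBallots lin bal ∧
    ∀ p : Fin n → E, f p = fbrValue lin bal fun i => Pref.top (p i).1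

/-- An `(xlo, xhi)`-FBR: an FBR that additionally satisfies the
constrained-dictatorship condition. -/
def IsConstrainedFBR {β : Type u} [Fintype β] [Nonempty β] (lin : LinearOrder β)
    (xlo xhi : β) (E : Set (Pref β)) {n : ℕ} (f : (Fin n → E) → β) : Prop :=
  ∃ bal : Finset (Fin n) → β, FBRBallots lin bal ∧
    (∀ p : Fin n → E, f p = fbrValue lin bal fun i => Pref.top (p i).1) ∧
    ∃ i : Fin n, ∀ J : Finset (Fin n),
      (i ∈ J → lin.le xhi (bal J)) ∧ (i ∉ J → lin.le (bal J) xlo)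

namespace Pref
variable {α : Type u}
-- new material
theorem irrefl (P : Pref α) (a : α) : ¬ P.rel a a := fun h => P.asymm a a h h

theorem ne_of_rel (P : Pref α) {a b : α} (h : P.rel a b) : a ≠ b := by
  rintro rfl; exact P.irrefl a h

theorem top_unique [Finite α] [Nonempty α] (P : Pref α) {a : α}
    (h : ∀ b, b ≠ a → P.rel a b) : P.top = a := by
  by_contra hne
  exact P.asymm _ _ (h P.top hne) (P.top_spec a (fun e => hne e.symm))

theorem rel_top_iff [Finite α] [Nonempty α] (P : Pref α) {a : α} :
    P.top = a ↔ ∀ b, b ≠ a → P.rel a b := by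
  constructor
  · rintro rfl; exact P.top_spec
  · exact P.top_unique

theorem rank_lt_of_rel [Finite α] (P : Pref α) {a b : α} (h : P.rel a b) :
    P.rank a < P.rank b := by
  have hsub : {c | P.rel c a} ∪ {a} ⊆ {c | P.rel c b} := by
    rintro c (hc | rfl)
    · exact P.trans _ _ _ hc h
    · exact h
  have hne : a ∉ {c | P.rel c a} := P.irrefl a
  have hss : {c | P.rel c a} ⊂ {c | P.rel c b} := by
    constructor
    · exact fun c hc => hsub (Or.inl hc)
    · intro hcon
      exact hne (hcon (hsub (Or.inr rfl)))
  have := Set.ncard_lt_ncard hss (Set.toFinite _)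
  simp only [rank]; omega

theorem rel_iff_rank_lt [Finite α] (P : Pref α) {a b : α} (hab : a ≠ b) :
    P.rel a b ↔ P.rank a < P.rank b := by
  constructor
  · exact P.rank_lt_of_rel
  · intro h
    rcases P.total a b hab with h' | h'
    · exact h'
    · exact absurd (P.rank_lt_of_rel h') (by omega)

theorem rank_eq_one_iff [Finite α] [Nonempty α] (P : Pref α) {a : α} :
    P.rank a = 1 ↔ P.top = a := by
  constructor
  · intro h
    have : {b | P.rel b a}.ncard = 0 := by simp only [rank] at h; omega
    have hempty : {b | P.rel b a} = ∅ :=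
      (Set.ncard_eq_zero (Set.toFinite _)).mp this
    apply P.top_unique
    intro b hb
    rcases P.total a b (fun e => hb e.symm) with h' | h'
    · exact h'
    · exact absurd h' (by intro hc; exact absurd (hempty ▸ hc : b ∈ (∅ : Set α)) (by simp))
  · rintro rfl
    have : {b | P.rel b P.top} = ∅ := by
      ext b; simp only [Set.mem_setOf_eq, Set.mem_empty_iff_false, iff_false]
      intro hb
      exact P.asymm _ _ hb (P.top_spec b (P.ne_of_rel hb))
    simp [rank, this]

theorem rank_injective [Finite α] (P : Pref α) {a b : α} (h : P.rank a = P.rank b) : a = b := by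
  by_contra hne
  rcases P.total a b hne with h' | h'
  · exact absurd (P.rank_lt_of_rel h') (by omega)
  · exact absurd (P.rank_lt_of_rel h') (by omega)

theorem setOf_rel_rank_two [Finite α] (P : Pref α) {a : α} (h : P.rank a = 2) :
    {b | P.rel b a}.ncard = 1 := by simp only [rank] at h; omega

end Pref

section Swap

variable {β : Type u} [Finite β] [Nonempty β]

theorem Pref.rank_pos (P : Pref β) (a : β) : 1 ≤ P.rank a := by
  simp [Pref.rank]

/-- Package extracted from a strongly connected pair. -/
theorem swap_package {E : Set (Pref β)} {x y : β} (hxy : x ≠ y)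
    (h : StronglyConnected E x y) :
    ∃ Q ∈ E, ∃ Q' ∈ E, Q.top = x ∧ Q'.top = y ∧
      (∀ a b, Q.rel a b → Q'.rel b a → a = x ∧ b = y) := by
  obtain ⟨Q, hQ, Q', hQ', r1, r2, r3, r4, hoff⟩ := h
  refine ⟨Q, hQ, Q', hQ', Q.rank_eq_one_iff.mp r1, Q'.rank_eq_one_iff.mp r3, ?_⟩
  intro a b hab hba
  have hane : a ≠ b := Q.ne_of_rel hab
  have h1 : Q.rank a < Q.rank b := Q.rank_lt_of_rel hab
  have h2 : Q'.rank b < Q'.rank a := Q'.rank_lt_of_rel hba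
  have key : ∀ z, z ≠ x → z ≠ y → 3 ≤ Q.rank z := by
    intro z hzx hzy
    have n1 : Q.rank z ≠ 1 := fun h => hzx (Q.rank_injective (h.trans r1.symm))
    have n2 : Q.rank z ≠ 2 := fun h => hzy (Q.rank_injective (h.trans r2.symm))
    have := Q.rank_pos z
    omega
  by_cases hax : a = x
  · subst hax
    by_cases hby : b = y
    · exact ⟨rfl, hby⟩
    · have hbx : b ≠ a := hane.symm
      have h3 : 3 ≤ Q.rank b := key b hbx hby
      have heq : Q.rank b = Q'.rank b := hoff b hbx hby
      rw [r4] at h2; omega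
  · by_cases hay : a = y
    · subst hay
      by_cases hbx : b = x
      · subst hbx; rw [r1, r2] at h1; omega
      · have h3 : Q'.rank b < 1 := by rw [r3] at h2; exact h2
        have := Q'.rank_pos b; omega
    · have h3 : 3 ≤ Q.rank a := key a hax hay
      have heqa : Q.rank a = Q'.rank a := hoff a hax hay
      by_cases hbx : b = x
      · subst hbx; rw [r1] at h1; omega
      · by_cases hby : b = y
        · subst hby; rw [r2] at h1; omega
        · have heqb : Q.rank b = Q'.rank b := hoff b hbx hby
          omega

end Swap

section Master

variable {β : Type u} [Fintype β] [Nonempty β] [LinearOrder β]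

/-- Single-peakedness w.r.t. the ambient linear order. -/
def SP1 (Q : Pref β) : Prop :=
  ∀ x y : β, x ≠ y → min Q.top y ≤ x → x ≤ max Q.top y → Q.rel x y

theorem SP1.rel_of_rel_max {Q : Pref β} (hQ : SP1 Q) (htop : ∀ z, z ≤ Q.top)
    {v w : β} (h : Q.rel v w) : w < v := by
  rcases lt_or_ge w v with h' | h'
  · exact h'
  · exfalso
    have hvw : v ≠ w := Q.ne_of_rel h
    have hv : v < w := lt_of_le_of_ne h' hvw
    exact Q.asymm _ _ (hQ w v hvw.symm (min_le_iff.mpr (Or.inr hv.le))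
      (le_max_iff.mpr (Or.inl (htop w)))) h

theorem SP1.rel_of_rel_min {Q : Pref β} (hQ : SP1 Q) (htop : ∀ z, Q.top ≤ z)
    {v w : β} (h : Q.rel v w) : v < w := by
  rcases lt_or_ge v w with h' | h'
  · exact h'
  · exfalso
    have hvw : v ≠ w := Q.ne_of_rel h
    have hv : w < v := lt_of_le_of_ne h' hvw.symm
    exact Q.asymm _ _ (hQ w v hvw.symm (min_le_iff.mpr (Or.inl (htop w)))
      (le_max_iff.mpr (Or.inr hv.le))) h

/-- Adjacency in the linear order. -/
def AdjL (x y : β) : Prop := x ≠ y ∧ ∀ z, ¬(min x y < z ∧ z < max x y)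

theorem AdjL.symm' {x y : β} (h : AdjL x y) : AdjL y x := by
  refine ⟨h.1.symm, fun z hz => h.2 z ?_⟩
  rwa [min_comm, max_comm] at hz

theorem scEdge_adjL {E : Set (Pref β)} (hE : ∀ Q ∈ E, SP1 Q) {x y : β}
    (h : scEdge E x y) : AdjL x y := by
  obtain ⟨hxy, Q, hQE, Q', hQ'E, r1, r2, -, -, -⟩ := h
  have htop : Q.top = x := Q.rank_eq_one_iff.mp r1
  refine ⟨hxy, fun z hz => ?_⟩
  have hzx : z ≠ x := by
    rintro rfl
    rcases min_lt_iff.mp hz.1 with h1 | h1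
    · exact absurd h1 (lt_irrefl _)
    · rcases lt_max_iff.mp hz.2 with h2 | h2
      · exact absurd h2 (lt_irrefl _)
      · exact absurd (h1.trans h2) (lt_irrefl _)
  have hzy : z ≠ y := by
    rintro rfl
    rcases min_lt_iff.mp hz.1 with h1 | h1
    · rcases lt_max_iff.mp hz.2 with h2 | h2
      · exact absurd (h1.trans h2) (lt_irrefl _)
      · exact absurd h2 (lt_irrefl _)
    · exact absurd h1 (lt_irrefl _)
  have hrel1 : Q.rel x y := by
    have := Q.top_spec y (by rw [htop]; exact fun e => hxy e.symm)
    rwa [htop] at this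
  have hrel2 : Q.rel z y :=
    hE Q hQE z y hzy (by rw [htop]; exact hz.1.le) (by rw [htop]; exact hz.2.le)
  have hone : {b | Q.rel b y}.ncard = 1 := Q.setOf_rel_rank_two r2
  have : 1 < {b | Q.rel b y}.ncard :=
    (Set.one_lt_ncard (Set.toFinite _)).mpr ⟨x, hrel1, z, hrel2, fun e => hzx e.symm⟩
  omega

/-- Intermediate value theorem for adjacency chains. -/
theorem chain_mem_of_between :
    ∀ (l : List β), l.Chain' AdjL → ∀ a y, l.head? = some a → l.getLast? = some y →
      ∀ c, min a y ≤ c → c ≤ max a y → c ∈ l := by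
  intro l
  induction l with
  | nil => intro _ a y h; simp at h
  | cons a' t ih =>
    intro hc a y hhead hlast c hc1 hc2
    simp only [List.head?_cons, Option.some_inj] at hhead
    subst hhead
    match t with
    | [] =>
      simp only [List.getLast?_singleton, Option.some_inj] at hlast
      subst hlast
      simp only [min_self] at hc1
      simp only [max_self] at hc2
      simp [le_antisymm hc2 hc1]
    | b :: t' =>
      have hadj : AdjL a' b := (List.isChain_cons_cons.mp hc).1
      have hc' : (b :: t').Chain' AdjL := (List.isChain_cons_cons.mp hc).2
      have hlast' : (b :: t').getLast? = some y := by
        rwa [List.getLast?_cons_cons] at hlast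
      by_cases hca : c = a'
      · simp [hca]
      · refine List.mem_cons_of_mem _ (ih hc' b y rfl hlast' c ?_ ?_)
        · -- min b y ≤ c
          by_contra hcon
          push_neg at hcon
          have hcb : c < b := lt_of_lt_of_le hcon (min_le_left _ _)
          have hcy : c < y := lt_of_lt_of_le hcon (min_le_right _ _)
          have hac : a' ≤ c := by
            rcases min_cases a' y with ⟨h1, -⟩ | ⟨h1, h2⟩
            · rwa [h1] at hc1
            · rw [h1] at hc1; exact absurd (lt_of_le_of_lt hc1 hcy) (lt_irrefl _)
          have hac' : a' < c := lt_of_le_of_ne hac (fun e => hca e.symm)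
          exact hadj.2 c ⟨by rw [min_eq_left (hac'.trans hcb).le]; exact hac',
            by rw [max_eq_right (hac'.trans hcb).le]; exact hcb⟩
        · -- c ≤ max b y
          by_contra hcon
          push_neg at hcon
          have hcb : b < c := lt_of_le_of_lt (le_max_left _ _) hcon
          have hcy : y < c := lt_of_le_of_lt (le_max_right _ _) hcon
          have hac : c ≤ a' := by
            rcases max_cases a' y with ⟨h1, -⟩ | ⟨h1, h2⟩
            · rwa [h1] at hc2
            · rw [h1] at hc2; exact absurd (lt_of_lt_of_le hcy hc2) (lt_irrefl _)
          have hac' : c < a' := lt_of_le_of_ne hac hca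
          exact hadj.2 c ⟨by rw [min_eq_right (hcb.trans hac').le]; exact hcb,
            by rw [max_eq_left (hcb.trans hac').le]; exact hac'⟩

theorem StronglyConnected.symm'' {E : Set (Pref β)} {x y : β}
    (h : StronglyConnected E x y) : StronglyConnected E y x := by
  obtain ⟨Q, hQ, Q', hQ', r1, r2, r3, r4, hoff⟩ := h
  exact ⟨Q', hQ', Q, hQ, r3, r4, r1, r2, fun z h1 h2 => (hoff z h2 h1).symm⟩

theorem adjL_scEdge {E : Set (Pref β)} (hconn : GraphConnectedOn (scEdge E) Set.univ)
    (hE : ∀ Q ∈ E, SP1 Q) {x y : β} (hxy0 : AdjL x y) : scEdge E x y := by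
  obtain ⟨l, hlen, hnodup, hhead, hlast, -, hchain⟩ :=
    hconn x trivial y trivial hxy0.1
  rcases l with - | ⟨a', l'⟩
  · simp at hhead
  rcases l' with - | ⟨b, t⟩
  · simp at hlen
  · simp only [List.head?_cons, Option.some_inj] at hhead
    have hhx := hhead.symm
    subst hhx
    have hedge : scEdge E x b := (List.isChain_cons_cons.mp hchain).1
    by_cases hby : b = y
    · subst hby; exact hedge
    · exfalso
      have hadjxb : AdjL x b := scEdge_adjL hE hedge
      -- b and y are on opposite sides of x
      have hbet : min b y < x ∧ x < max b y := by
        rcases lt_trichotomy b x with hbx | hbx | hbx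
        · rcases lt_trichotomy y x with hyx | hyx | hyx
          · -- both below x : contradiction
            exfalso
            rcases lt_trichotomy b y with h1 | h1 | h1
            · exact hadjxb.2 y ⟨by rw [min_comm, min_eq_left hbx.le]; exact h1,
                by rw [max_comm, max_eq_right hbx.le]; exact hyx⟩
            · exact hby h1
            · exact hxy0.2 b ⟨by rw [min_eq_right hyx.le]; exact h1,
                by rw [max_eq_left hyx.le]; exact hbx⟩
          · exact absurd hyx hxy0.1.symm
          · exact ⟨by rw [min_eq_left (hbx.trans hyx).le]; exact hbx,
              by rw [max_eq_right (hbx.trans hyx).le]; exact hyx⟩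
        · exact absurd hbx hadjxb.1.symm
        · rcases lt_trichotomy y x with hyx | hyx | hyx
          · exact ⟨by rw [min_eq_right (hyx.trans hbx).le]; exact hyx,
              by rw [max_eq_left (hyx.trans hbx).le]; exact hbx⟩
          · exact absurd hyx hxy0.1.symm
          · -- both above x : contradiction
            exfalso
            rcases lt_trichotomy b y with h1 | h1 | h1
            · exact hxy0.2 b ⟨by rw [min_eq_left hyx.le]; exact hbx,
                by rw [max_eq_right hyx.le]; exact h1⟩
            · exact hby h1
            · exact hadjxb.2 y ⟨by rw [min_comm, min_eq_right hbx.le]; exact hyx,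
                by rw [max_comm, max_eq_left hbx.le]; exact h1⟩
      have hchain' : (b :: t).Chain' AdjL :=
        ((List.isChain_cons_cons.mp hchain).2).imp (fun _ _ h => scEdge_adjL hE h)
      have hlast' : (b :: t).getLast? = some y := by
        rwa [List.getLast?_cons_cons] at hlast
      have hxmem : x ∈ b :: t :=
        chain_mem_of_between (b :: t) hchain' b y rfl hlast' x hbet.1.le hbet.2.le
      exact (List.nodup_cons.mp hnodup).1 hxmem

/-- Every alternative is the top of some preference in `E`. -/
theorem exists_top_pref {E : Set (Pref β)} (hconn : GraphConnectedOn (scEdge E) Set.univ)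
    (hcard : 2 ≤ Fintype.card β) (z : β) : ∃ Q ∈ E, Q.top = z := by
  obtain ⟨y, hy⟩ := Fintype.exists_ne_of_one_lt_card (by omega) z
  obtain ⟨l, hlen, -, hhead, -, -, hchain⟩ := hconn z trivial y trivial hy.symm
  rcases l with - | ⟨a', l'⟩
  · simp at hhead
  rcases l' with - | ⟨b, t⟩
  · simp at hlen
  · simp only [List.head?_cons, Option.some_inj] at hhead
    have hhx := hhead.symm
    subst hhx
    have hedge : scEdge E z b := (List.isChain_cons_cons.mp hchain).1
    obtain ⟨Q, hQ, Q', hQ', htop, htop', hkey⟩ := swap_package hedge.1 hedge.2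
    exact ⟨Q, hQ, htop⟩

/-- Canonical swap pair for an adjacent pair. -/
theorem adj_swap_pair {E : Set (Pref β)} (hconn : GraphConnectedOn (scEdge E) Set.univ)
    (hE : ∀ Q ∈ E, SP1 Q) {x y : β} (h : AdjL x y) :
    ∃ Q ∈ E, ∃ Q' ∈ E, Q.top = x ∧ Q'.top = y ∧
      (∀ a b, Q.rel a b → Q'.rel b a → a = x ∧ b = y) :=
  swap_package h.1 (adjL_scEdge hconn hE h).2

end Master

section FBRAlg

variable {β : Type u} [Fintype β] [Nonempty β] [lo : LinearOrder β] {n : ℕ}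

def botE : β := Finset.univ.min' Finset.univ_nonempty
def topE : β := Finset.univ.max' Finset.univ_nonempty

theorem botE_le (z : β) : botE ≤ z := Finset.min'_le _ _ (Finset.mem_univ z)
theorem le_topE (z : β) : z ≤ (topE : β) := Finset.le_max' _ _ (Finset.mem_univ z)

theorem fbrValue_eq_sup' (bal : Finset (Fin n) → β) (t : Fin n → β) :
    fbrValue lo bal t = Finset.univ.sup' ⟨∅, Finset.mem_univ _⟩
      (fun J : Finset (Fin n) =>
        (insert (bal J) (J.image t)).inf' (Finset.insert_nonempty _ _) id) := rfl

theorem fbrValue_unanimous (bal : Finset (Fin n) → β) (hbot : bal ∅ = botE)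
    (htop : bal Finset.univ = topE) {t : Fin n → β} {a : β} (ht : ∀ i, t i = a) :
    fbrValue lo bal t = a := by
  rw [fbrValue_eq_sup']
  apply le_antisymm
  · apply Finset.sup'_le
    intro J _
    rcases J.eq_empty_or_nonempty with rfl | ⟨i0, hi0⟩
    · simp [hbot, botE_le]
    · apply Finset.inf'_le (f := id) (b := a)
      exact Finset.mem_insert_of_mem (Finset.mem_image.mpr ⟨i0, hi0, ht i0⟩)
  · refine le_trans ?_ (Finset.le_sup' _ (Finset.mem_univ Finset.univ))
    apply Finset.le_inf'
    intro b hb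
    rcases Finset.mem_insert.mp hb with rfl | hb
    · rw [htop]; exact le_topE a
    · obtain ⟨i0, -, rfl⟩ := Finset.mem_image.mp hb
      simp [ht i0]

theorem inf'_congr_set {γ : Type*} [SemilatticeInf γ] {s t : Finset γ} (h : s = t) (hs : s.Nonempty) :
    s.inf' hs id = t.inf' (h ▸ hs) (id : γ → γ) := by subst h; rfl

set_option maxHeartbeats 2000000 in
theorem fbrValue_update (bal : Finset (Fin n) → β)
    (hmono : ∀ J J' : Finset (Fin n), J ⊂ J' → bal J ≤ bal J')
    (t : Fin n → β) (i : Fin n) (z : β) :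
    fbrValue lo bal (Function.update t i z) =
      max (fbrValue lo bal (Function.update t i botE))
        (min z (fbrValue lo bal (Function.update t i topE))) ∧
    fbrValue lo bal (Function.update t i botE) ≤
      fbrValue lo bal (Function.update t i topE) := by
  classical
  let gbar : Finset (Fin n) → β := fun J =>
    (insert (bal J) (J.image t)).inf' (Finset.insert_nonempty _ _) id
  let c : Finset (Fin n) → β := fun J =>
    (insert (bal J) ((J.erase i).image t)).inf' (Finset.insert_nonempty _ _) id
  have hAne : (Finset.univ.filter (fun J : Finset (Fin n) => i ∉ J)).Nonempty :=
    ⟨∅, by simp⟩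
  have hCne : (Finset.univ.filter (fun J : Finset (Fin n) => i ∈ J)).Nonempty :=
    ⟨{i}, by simp⟩
  let A' : β := (Finset.univ.filter (fun J : Finset (Fin n) => i ∉ J)).sup' hAne gbar
  let C' : β := (Finset.univ.filter (fun J : Finset (Fin n) => i ∈ J)).sup' hCne c
  have hterm : ∀ (w : β) (J : Finset (Fin n)),
      (insert (bal J) (J.image (Function.update t i w))).inf' (Finset.insert_nonempty _ _) id
        = if i ∈ J then min w (c J) else gbar J := by
    intro w J
    by_cases hiJ : i ∈ J
    · rw [if_pos hiJ]
      have h1 : J.image (Function.update t i w)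
          = insert w ((J.erase i).image (Function.update t i w)) := by
        conv_lhs => rw [← Finset.insert_erase hiJ]
        rw [Finset.image_insert, Function.update_self]
      have h2 : (J.erase i).image (Function.update t i w) = (J.erase i).image t := by
        apply Finset.image_congr
        intro j hj
        have hji : j ≠ i := (Finset.mem_erase.mp hj).1
        simp [Function.update_apply, hji]
      have h3 : insert (bal J) (J.image (Function.update t i w))
          = insert w (insert (bal J) ((J.erase i).image t)) := by
        rw [h1, h2, Finset.insert_comm]
      calc (insert (bal J) (J.image (Function.update t i w))).inf'
            (Finset.insert_nonempty _ _) id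
          = (insert w (insert (bal J) ((J.erase i).image t))).inf'
            (h3 ▸ Finset.insert_nonempty _ _) id := by
            apply inf'_congr_set h3
        _ = id w ⊓ (insert (bal J) ((J.erase i).image t)).inf'
            (Finset.insert_nonempty _ _) id :=
              Finset.inf'_insert (Finset.insert_nonempty _ _) id
        _ = min w (c J) := by rfl
    · rw [if_neg hiJ]
      have himg : J.image (Function.update t i w) = J.image t := by
        apply Finset.image_congr
        intro j hj
        have hji : j ≠ i := fun e => hiJ (e ▸ hj)
        simp [Function.update_apply, hji]
      rw [himg]
  have key : ∀ w : β, fbrValue lo bal (Function.update t i w) = max A' (min w C') := by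
    intro w
    rw [fbrValue_eq_sup', Finset.sup'_congr (H := ⟨∅, Finset.mem_univ _⟩) rfl
      (fun J _ => hterm w J)]
    apply le_antisymm
    · apply Finset.sup'_le
      intro J _
      by_cases hiJ : i ∈ J
      · rw [if_pos hiJ]
        refine le_trans ?_ (le_max_right A' (min w C'))
        exact min_le_min le_rfl (Finset.le_sup' c
          (Finset.mem_filter.mpr ⟨Finset.mem_univ J, hiJ⟩))
      · rw [if_neg hiJ]
        exact le_trans (Finset.le_sup' gbar
          (Finset.mem_filter.mpr ⟨Finset.mem_univ J, hiJ⟩)) (le_max_left A' (min w C'))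
    · apply max_le
      · apply Finset.sup'_le
        intro J hJ
        have hiJ : i ∉ J := (Finset.mem_filter.mp hJ).2
        refine le_trans (le_of_eq ?_) (Finset.le_sup'
          (fun J => if i ∈ J then min w (c J) else gbar J) (Finset.mem_univ J))
        rw [if_neg hiJ]
      · obtain ⟨Js, hJs, hCeq⟩ := Finset.exists_mem_eq_sup' hCne c
        have hiJ : i ∈ Js := (Finset.mem_filter.mp hJs).2
        have hCJs : C' = c Js := hCeq
        have : min w C' = (if i ∈ Js then min w (c Js) else gbar Js) := by
          rw [if_pos hiJ, hCJs]
        rw [this]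
        exact Finset.le_sup' (fun J => if i ∈ J then min w (c J) else gbar J)
          (Finset.mem_univ Js)
  have hAC : A' ≤ C' := by
    apply Finset.sup'_le
    intro J hJ
    have hiJ : i ∉ J := (Finset.mem_filter.mp hJ).2
    have hle : gbar J ≤ c (insert i J) := by
      have herase : (insert i J).erase i = J := Finset.erase_insert hiJ
      show gbar J ≤ (insert (bal (insert i J)) (((insert i J).erase i).image t)).inf' _ id
      rw [herase]
      apply Finset.le_inf'
      intro b hb
      rcases Finset.mem_insert.mp hb with rfl | hb
      · exact le_trans (Finset.inf'_le id (Finset.mem_insert_self _ _))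
          (hmono J (insert i J) (Finset.ssubset_insert hiJ))
      · exact Finset.inf'_le id (Finset.mem_insert_of_mem hb)
    exact le_trans hle (Finset.le_sup' c (Finset.mem_filter.mpr
      ⟨Finset.mem_univ _, Finset.mem_insert_self i J⟩))
  have hbotval : fbrValue lo bal (Function.update t i botE) = A' := by
    rw [key botE, min_eq_left (botE_le _)]
    apply max_eq_left
    refine le_trans (botE_le (gbar ∅)) ?_
    exact Finset.le_sup' gbar (Finset.mem_filter.mpr ⟨Finset.mem_univ _, by simp⟩)
  have htopval : fbrValue lo bal (Function.update t i topE) = C' := by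
    rw [key topE, min_eq_right (le_topE _)]
    exact max_eq_right hAC
  exact ⟨by rw [key z, hbotval, htopval], by rw [hbotval, htopval]; exact hAC⟩

end FBRAlg

section Clamp

variable {β : Type u} [Fintype β] [Nonempty β] [lo : LinearOrder β]

/-- The clamped value is the preference-best point among values of the clamp formula. -/
theorem clamp_best {Q : Pref β} (hQ : SP1 Q) {A C : β} (z : β) (hAC : A ≤ C)
    (hne : max A (min Q.top C) ≠ max A (min z C)) :
    Q.rel (max A (min Q.top C)) (max A (min z C)) := by
  set o' := max A (min z C) with ho'
  have hA' : A ≤ o' := le_max_left _ _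
  have hC' : o' ≤ C := max_le hAC (min_le_right _ _)
  rcases lt_or_ge Q.top A with htA | htA
  · have ho : max A (min Q.top C) = A := by
      apply max_eq_left
      exact le_trans (min_le_left _ _) htA.le
    rw [ho] at hne ⊢
    have hAo' : A < o' := lt_of_le_of_ne hA' hne
    exact hQ A o' hne (le_trans (min_le_left _ _) htA.le)
      (le_trans hA' (le_max_right _ _))
  · rcases le_or_gt Q.top C with htC | htC
    · have ho : max A (min Q.top C) = Q.top := by
        rw [min_eq_left htC]; exact max_eq_right htA
      rw [ho] at hne ⊢
      exact Q.top_spec o' (Ne.symm hne)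
    · have ho : max A (min Q.top C) = C := by
        rw [min_eq_right htC.le]; exact max_eq_right hAC
      rw [ho] at hne ⊢
      have ho'C : o' < C := lt_of_le_of_ne hC' (Ne.symm hne)
      exact hQ C o' hne (min_le_iff.mpr (Or.inr hC'))
        (le_max_iff.mpr (Or.inl htC.le))

theorem tops_update {E : Set (Pref β)} {n : ℕ} (p : Fin n → E) (i : Fin n) (Q : E) :
    (fun j => Pref.top ((Function.update p i Q) j).1)
      = Function.update (fun j => Pref.top ((p j).1)) i (Pref.top Q.1) := by
  funext j
  by_cases hj : j = i
  · subst hj; simp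
  · simp [Function.update_apply, hj]

theorem isFBR_implies {E : Set (Pref β)} (hE : ∀ Q ∈ E, SP1 Q) {n : ℕ}
    (f : (Fin n → E) → β) (h : IsFBR lo E f) :
    Unanimous E f ∧ StrategyProof E f := by
  obtain ⟨bal, ⟨hbot, htop, hmono⟩, hform⟩ := h
  constructor
  · intro p a htops
    rw [hform p]
    exact fbrValue_unanimous bal hbot htop htops
  · intro p i Q hne
    set t : Fin n → β := fun j => Pref.top ((p j).1) with ht
    have h1 : f p = fbrValue lo bal (Function.update t i (Pref.top (p i).1)) := by
      rw [hform p]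
      congr 1
      exact (Function.update_eq_self i t).symm
    have h2 : f (Function.update p i Q)
        = fbrValue lo bal (Function.update t i (Pref.top Q.1)) := by
      rw [hform _, tops_update]
    have hQtop : Pref.top ((p i).1) = ((p i).1).top := rfl
    obtain ⟨hu1, hAC⟩ := fbrValue_update bal hmono t i (Pref.top (p i).1)
    obtain ⟨hu2, -⟩ := fbrValue_update bal hmono t i (Pref.top Q.1)
    rw [h1, hu1, h2, hu2]
    rw [h1, hu1, h2, hu2] at hne
    exact clamp_best (hE _ (p i).2) _ hAC hne

end Clamp

section SPTools

variable {β : Type u} [Fintype β] [Nonempty β] [lo : LinearOrder β]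
variable {E : Set (Pref β)} {n : ℕ} {f : (Fin n → E) → β}

/-- Strategy-proofness for two profiles differing in one coordinate. -/
theorem sp_two (hf : StrategyProof E f) (p q : Fin n → E) (i : Fin n)
    (hpq : ∀ j, j ≠ i → p j = q j) (hne : f p ≠ f q) :
    (p i).1.rel (f p) (f q) := by
  have hq : q = Function.update p i (q i) := by
    funext j
    by_cases hj : j = i
    · subst hj; simp
    · simp [Function.update_apply, hj, (hpq j hj).symm]
  rw [hq] at hne ⊢
  exact hf p i (q i) hne

/-- The straddle lemma. -/
theorem straddle (hE : ∀ Q ∈ E, SP1 Q) (hf : StrategyProof E f)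
    (p q : Fin n → E) (i : Fin n) (hpq : ∀ j, j ≠ i → p j = q j)
    (htop : ((p i).1).top = ((q i).1).top) (hne : f p ≠ f q) :
    (f p < ((p i).1).top ∧ ((p i).1).top < f q) ∨
      (f q < ((p i).1).top ∧ ((p i).1).top < f p) := by
  have r1 : (p i).1.rel (f p) (f q) := sp_two hf p q i hpq hne
  have r2 : (q i).1.rel (f q) (f p) :=
    sp_two hf q p i (fun j hj => (hpq j hj).symm) (Ne.symm hne)
  have htp : ((p i).1).top ≠ f p := by
    intro h
    have hfq : f q ≠ ((q i).1).top := by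
      rw [← htop, h]; exact fun e => hne e.symm
    have h1 : (q i).1.rel (((q i).1).top) (f q) := (q i).1.top_spec (f q) hfq
    rw [← htop, h] at h1
    exact (q i).1.asymm _ _ r2 h1
  have htq : ((p i).1).top ≠ f q := by
    intro h
    have hfp : f p ≠ ((p i).1).top := fun e => htp e.symm
    have h1 : (p i).1.rel (((p i).1).top) (f p) := (p i).1.top_spec (f p) hfp
    rw [h] at h1
    exact (p i).1.asymm _ _ r1 h1
  rcases lt_trichotomy (f p) (((p i).1).top) with h1 | h1 | h1
  · rcases lt_trichotomy (f q) (((p i).1).top) with h2 | h2 | h2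
    · exfalso
      rcases lt_trichotomy (f p) (f q) with h3 | h3 | h3
      · exact (p i).1.asymm _ _ r1 (hE _ (p i).2 (f q) (f p) (Ne.symm hne)
          (le_trans (min_le_right _ _) h3.le) (le_trans h2.le (le_max_left _ _)))
      · exact hne h3
      · refine (q i).1.asymm _ _ r2 (hE _ (q i).2 (f p) (f q) hne ?_ ?_)
        · rw [← htop]; exact le_trans (min_le_right _ _) h3.le
        · rw [← htop]; exact le_trans h1.le (le_max_left _ _)
    · exact absurd h2.symm htq
    · exact Or.inl ⟨h1, h2⟩
  · exact absurd h1.symm htp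
  · rcases lt_trichotomy (f q) (((p i).1).top) with h2 | h2 | h2
    · exact Or.inr ⟨h2, h1⟩
    · exact absurd h2.symm htq
    · exfalso
      rcases lt_trichotomy (f p) (f q) with h3 | h3 | h3
      · refine (q i).1.asymm _ _ r2 (hE _ (q i).2 (f p) (f q) hne ?_ ?_)
        · rw [← htop]; exact le_trans (min_le_left _ _) h1.le
        · rw [← htop]; exact le_trans h3.le (le_max_right _ _)
      · exact hne h3
      · exact (p i).1.asymm _ _ r1 (hE _ (p i).2 (f q) (f p) (Ne.symm hne)
          (le_trans (min_le_left _ _) h2.le) (le_trans h3.le (le_max_right _ _)))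
  
/-- Moving between the two members of a canonical swap pair moves the outcome
only from `x` to `y` (or leaves it unchanged). -/
theorem swap_outcome (hf : StrategyProof E f) {x y : β} {Qc Qc' : Pref β}
    (hkey : ∀ a b, Qc.rel a b → Qc'.rel b a → a = x ∧ b = y)
    (p q : Fin n → E) (i : Fin n) (hpq : ∀ j, j ≠ i → p j = q j)
    (hp : (p i).1 = Qc) (hq : (q i).1 = Qc')
    (hne : f p ≠ f q) : f p = x ∧ f q = y :=
  hkey _ _ (hp ▸ sp_two hf p q i hpq hne)
    (hq ▸ sp_two hf q p i (fun j hj => (hpq j hj).symm) (Ne.symm hne))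

end SPTools

section Clone

variable {β : Type u} [Fintype β] [Nonempty β] [lo : LinearOrder β]
variable {E : Set (Pref β)} {m : ℕ}

/-- Decomposition of a profile into its first two coordinates and the rest. -/
theorem cons_decomp (r : Fin (m + 2) → E) :
    r = Fin.cons (r 0) (Fin.cons (r 1) (fun k : Fin m => r k.succ.succ)) := by
  funext j
  rcases Fin.eq_zero_or_eq_succ j with rfl | ⟨k, rfl⟩
  · simp
  · rcases Fin.eq_zero_or_eq_succ k with rfl | ⟨l, rfl⟩
    · simp only [Fin.cons_succ, Fin.cons_zero]
      congr 1
    · simp [Fin.cons_succ]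

theorem cons_offeq0 (S S' T : E) (rest : Fin m → E) :
    ∀ j, j ≠ (0 : Fin (m + 2)) →
      (Fin.cons S (Fin.cons T rest) : Fin (m + 2) → E) j
        = (Fin.cons S' (Fin.cons T rest) : Fin (m + 2) → E) j := by
  intro j hj
  rcases Fin.eq_zero_or_eq_succ j with rfl | ⟨k, rfl⟩
  · exact absurd rfl hj
  · simp [Fin.cons_succ]

theorem cons_offeq1 (S T T' : E) (rest : Fin m → E) :
    ∀ j, j ≠ (1 : Fin (m + 2)) →
      (Fin.cons S (Fin.cons T rest) : Fin (m + 2) → E) j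
        = (Fin.cons S (Fin.cons T' rest) : Fin (m + 2) → E) j := by
  intro j hj
  rcases Fin.eq_zero_or_eq_succ j with rfl | ⟨k, rfl⟩
  · simp
  · rcases Fin.eq_zero_or_eq_succ k with rfl | ⟨l, rfl⟩
    · exfalso; apply hj; rfl
    · simp [Fin.cons_succ]

variable {f : (Fin (m + 2) → E) → β}

/-- The clone rule merging voters 0 and 1. -/
def cloneRule (f : (Fin (m + 2) → E) → β) : (Fin (m + 1) → E) → β :=
  fun r => f (Fin.cons (r 0) r)

theorem clone_unanimous (hu : Unanimous E f) : Unanimous E (cloneRule f) := by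
  intro r a htops
  apply hu
  intro i
  rcases Fin.eq_zero_or_eq_succ i with rfl | ⟨k, rfl⟩
  · simpa using htops 0
  · simpa using htops k

theorem clone_sp (hsp : StrategyProof E f) : StrategyProof E (cloneRule f) := by
  intro r k Q hne
  rcases Fin.eq_zero_or_eq_succ k with rfl | ⟨j, rfl⟩
  · -- merged voter
    set P : Fin (m + 2) → E := Fin.cons (r 0) r with hP
    have hkey : Fin.cons ((Function.update r 0 Q) 0) (Function.update r 0 Q)
        = Function.update (Function.update P 0 Q) 1 Q := by
      funext j
      rcases Fin.eq_zero_or_eq_succ j with rfl | ⟨k, rfl⟩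
      · rw [Fin.cons_zero, Function.update_self,
          Function.update_of_ne (by exact Fin.ne_of_val_ne (by norm_num)) _ _,
          Function.update_self]
      · rw [Fin.cons_succ]
        rcases Fin.eq_zero_or_eq_succ k with rfl | ⟨l, rfl⟩
        · rw [Function.update_self]
          have h1 : (0 : Fin (m+1)).succ = (1 : Fin (m+2)) := rfl
          rw [h1, Function.update_self]
        · have hne0 : l.succ.succ ≠ (1 : Fin (m + 2)) := by
            intro h
            have := congrArg Fin.val h
            simp [Fin.val_succ] at this
          have hne0' : l.succ.succ ≠ (0 : Fin (m + 2)) := Fin.succ_ne_zero _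
          have hne1 : l.succ ≠ (0 : Fin (m + 1)) := Fin.succ_ne_zero _
          rw [Function.update_of_ne hne1, Function.update_of_ne hne0,
            Function.update_of_ne hne0', hP, Fin.cons_succ]
    show (r 0).1.rel (cloneRule f r) (cloneRule f (Function.update r 0 Q))
    have hval : cloneRule f (Function.update r 0 Q)
        = f (Function.update (Function.update P 0 Q) 1 Q) := by
      unfold cloneRule
      rw [hkey]
    rw [hval]
    have hval0 : cloneRule f r = f P := rfl
    rw [hval0] at hne ⊢
    rw [hval] at hne
    set P1 := Function.update P 0 Q with hP1
    set P2 := Function.update P1 1 Q with hP2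
    have htruth0 : (P 0).1 = (r 0).1 := by rw [hP, Fin.cons_zero]
    have htruth1 : (P1 1).1 = (r 0).1 := by
      rw [hP1, Function.update_of_ne (by exact Fin.ne_of_val_ne (by norm_num)) _ _,
        hP]
      have h1 : (1 : Fin (m+2)) = (0 : Fin (m+1)).succ := rfl
      rw [h1, Fin.cons_succ]
    by_cases h01 : f P = f P1
    · have h12 : f P1 ≠ f P2 := by rw [← h01]; exact hne
      have := hsp P1 1 Q h12
      rw [htruth1] at this
      rw [h01]
      exact this
    · have r1 := hsp P 0 Q h01
      rw [htruth0] at r1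
      by_cases h12 : f P1 = f P2
      · rw [← h12]; exact r1
      · have r2 := hsp P1 1 Q h12
        rw [htruth1] at r2
        exact (r 0).1.trans _ _ _ r1 r2
  · -- ordinary voter j.succ
    have hkey : Fin.cons ((Function.update r j.succ Q) 0) (Function.update r j.succ Q)
        = Function.update (Fin.cons (r 0) r : Fin (m + 2) → E) j.succ.succ Q := by
      funext l
      rcases Fin.eq_zero_or_eq_succ l with rfl | ⟨k, rfl⟩
      · simp [Function.update_apply, (Fin.succ_ne_zero j).symm, (Fin.succ_ne_zero j.succ).symm]
      · by_cases hkj : k = j.succ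
        · subst hkj; simp
        · have h2 : k.succ ≠ j.succ.succ := fun h => hkj (Fin.succ_injective _ h)
          simp [Fin.cons_succ, Function.update_apply, hkj, h2]
    have hval : cloneRule f (Function.update r j.succ Q)
        = f (Function.update (Fin.cons (r 0) r : Fin (m + 2) → E) j.succ.succ Q) := by
      unfold cloneRule; rw [hkey]
    show (r j.succ).1.rel (cloneRule f r) (cloneRule f (Function.update r j.succ Q))
    rw [hval] at hne ⊢
    have := hsp (Fin.cons (r 0) r : Fin (m + 2) → E) j.succ.succ Q hne
    rwa [Fin.cons_succ] at this

end Clone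

section NoStraddle

variable {β : Type u} [Fintype β] [Nonempty β] [lo : LinearOrder β]
variable {E : Set (Pref β)} {m : ℕ} {f : (Fin (m + 2) → E) → β}

theorem update_cons_zero {γ : Type u} {k : ℕ} (a z : γ) (σ : Fin k → γ) :
    Function.update (Fin.cons a σ : Fin (k + 1) → γ) 0 z = Fin.cons z σ := by
  funext j
  rcases Fin.eq_zero_or_eq_succ j with rfl | ⟨l, rfl⟩
  · simp
  · simp [Function.update_of_ne (Fin.succ_ne_zero l), Fin.cons_succ]

theorem tops_cons (S : E) (rest' : Fin m → E) :
    (fun i => Pref.top (((Fin.cons S rest' : Fin (m + 1) → E) i).1))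
      = Fin.cons (Pref.top S.1) (fun k => Pref.top ((rest' k).1)) := by
  funext i
  rcases Fin.eq_zero_or_eq_succ i with rfl | ⟨l, rfl⟩
  · simp
  · simp [Fin.cons_succ]

theorem one_eq_succ_zero : (1 : Fin (m + 2)) = (0 : Fin (m + 1)).succ := rfl

theorem cons_at_one (S T : E) (rest' : Fin m → E) :
    (Fin.cons S (Fin.cons T rest') : Fin (m + 2) → E) 1 = T := by
  rw [one_eq_succ_zero, Fin.cons_succ, Fin.cons_zero]

/-- Oriented core of the no-straddle argument. -/
theorem noStraddle0_aux
    (hE1 : ∀ Q ∈ E, SP1 Q)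
    (pick : β → E) (hpick : ∀ z, ((pick z).1).top = z)
    (hsp : StrategyProof E f)
    (IH : ∀ g : (Fin (m + 1) → E) → β, Unanimous E g → StrategyProof E g → IsFBR lo E g)
    (hu : Unanimous E f)
    (p q : Fin (m + 2) → E) (hpq : ∀ j, j ≠ 0 → p j = q j)
    (htop : ((p 0).1).top = ((q 0).1).top)
    (ha : f p < ((p 0).1).top) (hb : ((p 0).1).top < f q) : False := by
  classical
  obtain ⟨bal, ⟨hb1, hb2, hb3⟩, hform⟩ :=
    IH (cloneRule f) (clone_unanimous hu) (clone_sp hsp)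
  set t : β := ((p 0).1).top with htdef
  set rest' : Fin m → E := fun k => p k.succ.succ with hrest
  set τ : Fin m → β := fun k => Pref.top ((rest' k).1) with hτ
  have hq1 : q 1 = p 1 := (hpq 1 (by exact Fin.ne_of_val_ne (by norm_num))).symm
  have hdp : p = Fin.cons (p 0) (Fin.cons (p 1) rest') := cons_decomp p
  have hdq : q = Fin.cons (q 0) (Fin.cons (p 1) rest') := by
    funext j
    rcases Fin.eq_zero_or_eq_succ j with rfl | ⟨k, rfl⟩
    · simp
    · rcases Fin.eq_zero_or_eq_succ k with rfl | ⟨l, rfl⟩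
      · rw [Fin.cons_succ, Fin.cons_zero]
        exact hq1
      · rw [Fin.cons_succ, Fin.cons_succ, hrest]
        exact (hpq l.succ.succ (Fin.succ_ne_zero _)).symm
  -- the merged-voter value function
  have hw : ∀ S : E, f (Fin.cons S (Fin.cons S rest') : Fin (m + 2) → E)
      = fbrValue lo bal (Fin.cons (Pref.top S.1) τ) := by
    intro S
    have h1 : cloneRule f (Fin.cons S rest')
        = f (Fin.cons S (Fin.cons S rest') : Fin (m + 2) → E) := by
      unfold cloneRule
      rw [Fin.cons_zero]
    rw [← h1, hform (Fin.cons S rest'), tops_cons]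
  -- clamp structure
  have hupdc : ∀ z : β, Function.update (Fin.cons t τ : Fin (m + 1) → β) 0 z
      = Fin.cons z τ := fun z => update_cons_zero t z τ
  have hW : ∀ z : β, fbrValue lo bal (Fin.cons z τ)
      = max (fbrValue lo bal (Fin.cons botE τ))
          (min z (fbrValue lo bal (Fin.cons topE τ))) := by
    intro z
    have h := (fbrValue_update bal hb3 (Fin.cons t τ) 0 z).1
    rwa [hupdc z, hupdc botE, hupdc topE] at h
  set A : β := fbrValue lo bal (Fin.cons botE τ) with hAdef
  set C : β := fbrValue lo bal (Fin.cons topE τ) with hCdef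
  have hAC : A ≤ C := by
    have h := (fbrValue_update bal hb3 (Fin.cons t τ) 0 botE).2
    rwa [hupdc botE, hupdc topE] at h
  set w0 : β := max A (min t C) with hw0def
  have hwp : f (Fin.cons (p 0) (Fin.cons (p 0) rest') : Fin (m + 2) → E) = w0 := by
    rw [hw (p 0), hW]
  have hwq : f (Fin.cons (q 0) (Fin.cons (q 0) rest') : Fin (m + 2) → E) = w0 := by
    rw [hw (q 0), ← htop, hW]
  rcases lt_trichotomy w0 t with hlt | heq | hgt
  · -- w0 < t : use the top-most preference
    have hC : C < t := by
      by_contra hcon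
      push_neg at hcon
      rw [hw0def, min_eq_left hcon] at hlt
      exact absurd (le_max_right A t) (not_le.mpr hlt)
    have hWtop : fbrValue lo bal (Fin.cons topE τ) = w0 := by
      rw [hW, min_eq_right (le_topE C), hw0def, min_eq_right hC.le]
    set R : E := pick topE with hRdef
    have hRmax : ∀ z : β, z ≤ ((R.1)).top := by
      intro z; rw [hpick]; exact le_topE z
    have hP4 : f (Fin.cons R (Fin.cons R rest') : Fin (m + 2) → E) = w0 := by
      rw [hw R, hpick, hWtop]
    -- squeeze : f P5 = w0 where P5 has voter 0 ↦ q 0, voter 1 ↦ R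
    have hsq : f (Fin.cons (q 0) (Fin.cons R rest') : Fin (m + 2) → E) = w0 := by
      by_contra hv
      have h1 : f (Fin.cons R (Fin.cons R rest') : Fin (m + 2) → E)
          ≠ f (Fin.cons (q 0) (Fin.cons R rest') : Fin (m + 2) → E) := by
        rw [hP4]; exact fun e => hv e.symm
      have r1 := sp_two hsp _ _ 0 (cons_offeq0 R (q 0) R rest') h1
      rw [Fin.cons_zero, hP4] at r1
      have hlt1 : f (Fin.cons (q 0) (Fin.cons R rest') : Fin (m + 2) → E) < w0 :=
        SP1.rel_of_rel_max (hE1 R.1 R.2) hRmax r1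
      have h2 : f (Fin.cons (q 0) (Fin.cons R rest') : Fin (m + 2) → E)
          ≠ f (Fin.cons (q 0) (Fin.cons (q 0) rest') : Fin (m + 2) → E) := by
        rw [hwq]; exact hv
      have r2 := sp_two hsp _ _ 1 (cons_offeq1 (q 0) R (q 0) rest') h2
      rw [cons_at_one, hwq] at r2
      have hlt2 : w0 < f (Fin.cons (q 0) (Fin.cons R rest') : Fin (m + 2) → E) :=
        SP1.rel_of_rel_max (hE1 R.1 R.2) hRmax r2
      exact absurd hlt1 (not_lt.mpr hlt2.le)
    -- final contradiction using q
    have hqdiff : ∀ j, j ≠ (1 : Fin (m + 2)) →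
        (Fin.cons (q 0) (Fin.cons R rest') : Fin (m + 2) → E) j = q j := by
      intro j hj
      rw [hdq]
      exact cons_offeq1 (q 0) R (p 1) rest' j hj
    have hfin : f (Fin.cons (q 0) (Fin.cons R rest') : Fin (m + 2) → E) ≠ f q := by
      rw [hsq]
      exact fun e => absurd (e ▸ hb) (not_lt.mpr hlt.le)
    have r3 := sp_two hsp _ _ 1 hqdiff hfin
    rw [cons_at_one, hsq] at r3
    have : f q < w0 := SP1.rel_of_rel_max (hE1 R.1 R.2) hRmax r3
    exact absurd (hlt.trans hb) (not_lt.mpr this.le)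
  · -- w0 = t : direct contradiction via voter 1
    have hpdiff : ∀ j, j ≠ (1 : Fin (m + 2)) →
        p j = (Fin.cons (p 0) (Fin.cons (p 0) rest') : Fin (m + 2) → E) j := by
      intro j hj
      conv_lhs => rw [hdp]
      exact cons_offeq1 (p 0) (p 1) (p 0) rest' j hj
    have hqdiff : ∀ j, j ≠ (1 : Fin (m + 2)) →
        q j = (Fin.cons (q 0) (Fin.cons (q 0) rest') : Fin (m + 2) → E) j := by
      intro j hj
      conv_lhs => rw [hdq]
      exact cons_offeq1 (q 0) (p 1) (q 0) rest' j hj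
    have hne1 : f p ≠ f (Fin.cons (p 0) (Fin.cons (p 0) rest') : Fin (m + 2) → E) := by
      rw [hwp, heq]; exact ne_of_lt ha
    have r1 := sp_two hsp _ _ 1 hpdiff hne1
    rw [hwp, heq] at r1
    have hptop1 : p 1 = (Fin.cons (p 0) (Fin.cons (p 1) rest') : Fin (m + 2) → E) 1 :=
      (cons_at_one _ _ _).symm
    rw [show p ((1 : Fin (m+2))) = p 1 from rfl] at r1
    have hne2 : f q ≠ f (Fin.cons (q 0) (Fin.cons (q 0) rest') : Fin (m + 2) → E) := by
      rw [hwq, heq]; exact ne_of_gt hb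
    have r2 := sp_two hsp _ _ 1 hqdiff hne2
    rw [hwq, heq, hq1] at r2
    -- r1 : (p 1).rel (f p) t ; r2 : (p 1).rel (f q) t
    rcases le_or_gt (((p 1).1).top) t with hcase | hcase
    · refine (p 1).1.asymm _ _ r2 (hE1 _ (p 1).2 t (f q) (ne_of_lt hb) ?_ ?_)
      · exact le_trans (min_le_left _ _) hcase
      · exact le_trans hb.le (le_max_right _ _)
    · refine (p 1).1.asymm _ _ r1 (hE1 _ (p 1).2 t (f p) (ne_of_gt ha) ?_ ?_)
      · exact le_trans (min_le_right _ _) ha.le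
      · exact le_trans hcase.le (le_max_left _ _)
  · -- t < w0 : use the bottom-most preference
    have hA : t < A := by
      by_contra hcon
      push_neg at hcon
      have : w0 ≤ t := by
        rw [hw0def]
        exact max_le hcon (min_le_left _ _)
      exact absurd hgt (not_lt.mpr this)
    have hWbot : fbrValue lo bal (Fin.cons botE τ) = w0 := by
      rw [hw0def]
      have h1 : min t C ≤ A := le_trans (min_le_left _ _) hA.le
      rw [max_eq_left h1]
    set R : E := pick botE with hRdef
    have hRmin : ∀ z : β, ((R.1)).top ≤ z := by
      intro z; rw [hpick]; exact botE_le z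
    have hP4 : f (Fin.cons R (Fin.cons R rest') : Fin (m + 2) → E) = w0 := by
      rw [hw R, hpick, hWbot]
    have hsq : f (Fin.cons (p 0) (Fin.cons R rest') : Fin (m + 2) → E) = w0 := by
      by_contra hv
      have h1 : f (Fin.cons R (Fin.cons R rest') : Fin (m + 2) → E)
          ≠ f (Fin.cons (p 0) (Fin.cons R rest') : Fin (m + 2) → E) := by
        rw [hP4]; exact fun e => hv e.symm
      have r1 := sp_two hsp _ _ 0 (cons_offeq0 R (p 0) R rest') h1
      rw [Fin.cons_zero, hP4] at r1
      have hlt1 : w0 < f (Fin.cons (p 0) (Fin.cons R rest') : Fin (m + 2) → E) :=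
        SP1.rel_of_rel_min (hE1 R.1 R.2) hRmin r1
      have h2 : f (Fin.cons (p 0) (Fin.cons R rest') : Fin (m + 2) → E)
          ≠ f (Fin.cons (p 0) (Fin.cons (p 0) rest') : Fin (m + 2) → E) := by
        rw [hwp]; exact hv
      have r2 := sp_two hsp _ _ 1 (cons_offeq1 (p 0) R (p 0) rest') h2
      rw [cons_at_one, hwp] at r2
      have hlt2 : f (Fin.cons (p 0) (Fin.cons R rest') : Fin (m + 2) → E) < w0 :=
        SP1.rel_of_rel_min (hE1 R.1 R.2) hRmin r2
      exact absurd hlt1 (not_lt.mpr hlt2.le)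
    have hpdiff : ∀ j, j ≠ (1 : Fin (m + 2)) →
        (Fin.cons (p 0) (Fin.cons R rest') : Fin (m + 2) → E) j = p j := by
      intro j hj
      conv_rhs => rw [hdp]
      exact cons_offeq1 (p 0) R (p 1) rest' j hj
    have hfin : f (Fin.cons (p 0) (Fin.cons R rest') : Fin (m + 2) → E) ≠ f p := by
      rw [hsq]
      exact fun e => absurd (e ▸ hgt) (not_lt.mpr ha.le)
    have r3 := sp_two hsp _ _ 1 hpdiff hfin
    rw [cons_at_one, hsq] at r3
    have : w0 < f p := SP1.rel_of_rel_min (hE1 R.1 R.2) hRmin r3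
    exact absurd (ha.trans hgt) (not_lt.mpr this.le)

/-- No-straddle at voter 0. -/
theorem noStraddle0
    (hE1 : ∀ Q ∈ E, SP1 Q)
    (pick : β → E) (hpick : ∀ z, ((pick z).1).top = z)
    (hu : Unanimous E f) (hsp : StrategyProof E f)
    (IH : ∀ g : (Fin (m + 1) → E) → β, Unanimous E g → StrategyProof E g → IsFBR lo E g)
    (p q : Fin (m + 2) → E) (hpq : ∀ j, j ≠ 0 → p j = q j)
    (htop : ((p 0).1).top = ((q 0).1).top) : f p = f q := by
  by_contra hne
  rcases straddle hE1 hsp p q 0 hpq htop hne with ⟨h1, h2⟩ | ⟨h1, h2⟩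
  · exact noStraddle0_aux hE1 pick hpick hsp IH hu p q hpq htop h1 h2
  · rw [htop] at h1 h2
    exact noStraddle0_aux hE1 pick hpick hsp IH hu q p
      (fun j hj => (hpq j hj).symm) htop.symm h1 h2

end NoStraddle

section BuildFBR

variable {β : Type u} [Fintype β] [Nonempty β] [lo : LinearOrder β]
variable {E : Set (Pref β)} {N : ℕ}

theorem build_fbr {f : (Fin N → E) → β}
    (hconn : GraphConnectedOn (scEdge E) Set.univ)
    (hE1 : ∀ Q ∈ E, SP1 Q)
    (pick : β → E) (hpick : ∀ z, ((pick z).1).top = z)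
    (hu : Unanimous E f) (hsp : StrategyProof E f)
    (hto : ∀ p q : Fin N → E, (∀ i, ((p i).1).top = ((q i).1).top) → f p = f q) :
    IsFBR lo E f := by
  classical
  set F : (Fin N → β) → β := fun τ => f (fun i => pick (τ i)) with hF
  have h_fF : ∀ p : Fin N → E, f p = F (fun i => ((p i).1).top) := by
    intro p
    apply hto
    intro i
    rw [hpick]
  have hFun : ∀ (τ : Fin N → β) (a : β), (∀ i, τ i = a) → F τ = a := by
    intro τ a h
    exact hu _ a (fun i => by rw [hpick, h i])
  have hsp' : ∀ (τ : Fin N → β) (i : Fin N) (z z' : β),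
      F (Function.update τ i z) ≠ F (Function.update τ i z') →
      ((pick z).1).rel (F (Function.update τ i z)) (F (Function.update τ i z')) := by
    intro τ i z z' hne
    have hoff : ∀ j, j ≠ i → (fun j => pick (Function.update τ i z j)) j
        = (fun j => pick (Function.update τ i z' j)) j := by
      intro j hj
      simp [Function.update_apply, hj]
    have h := sp_two hsp (fun j => pick (Function.update τ i z j))
      (fun j => pick (Function.update τ i z' j)) i hoff hne
    simpa using h
  -- Claim U : clamp structure of unilateral deviations
  have claimU : ∀ (τ : Fin N → β) (i : Fin N) (z : β),
      F (Function.update τ i z)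
        = max (F (Function.update τ i botE)) (min z (F (Function.update τ i topE))) := by
    intro τ i
    set mfun : β → β := fun z => F (Function.update τ i z) with hm
    have hfix : ∀ z z', mfun z' = z → mfun z = z := by
      intro z z' h
      by_contra hne
      have h1 : (pick z).1.rel (mfun z) z := by
        have h0 := hsp' τ i z z' (by show mfun z ≠ mfun z'; rw [h]; exact hne)
        have h0' : (pick z).1.rel (mfun z) (mfun z') := h0
        rwa [h] at h0'
      have h2 : (pick z).1.rel z (mfun z) := by
        have h3 := ((pick z).1).top_spec (mfun z) (by rw [hpick]; exact fun e => hne e)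
        rwa [hpick] at h3
      exact (pick z).1.asymm _ _ h1 h2
    have hAmin : ∀ z, mfun botE ≤ mfun z := by
      intro z
      rcases eq_or_ne (mfun botE) (mfun z) with h | h
      · exact h.le
      · exact (SP1.rel_of_rel_min (hE1 _ (pick botE).2)
          (by intro u; rw [hpick]; exact botE_le u) (hsp' τ i botE z h)).le
    have hCmax : ∀ z, mfun z ≤ mfun topE := by
      intro z
      rcases eq_or_ne (mfun topE) (mfun z) with h | h
      · exact h.ge
      · exact (SP1.rel_of_rel_max (hE1 _ (pick topE).2)
          (by intro u; rw [hpick]; exact le_topE u) (hsp' τ i topE z h)).le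
    have hAC : mfun botE ≤ mfun topE := hAmin topE
    have hbet : ∀ z v, (∃ z', mfun z' = v) → v ≠ mfun z →
        min z (mfun z) ≤ v → v ≤ max z (mfun z) → False := by
      rintro z v ⟨z', hv⟩ hne h1 h2
      have r : (pick z).1.rel (mfun z) v := by
        have r0 := hsp' τ i z z' (by show mfun z ≠ mfun z'; rw [hv]; exact fun e => hne e.symm)
        have r0' : (pick z).1.rel (mfun z) (mfun z') := r0
        rwa [hv] at r0'
      refine (pick z).1.asymm _ _ r (hE1 _ (pick z).2 v (mfun z) hne ?_ ?_)
      · rw [hpick]; exact h1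
      · rw [hpick]; exact h2
    -- interval property of the option set
    have hint : ∀ c, mfun botE ≤ c → c ≤ mfun topE → ∃ z, mfun z = c := by
      intro c hc1 hc2
      by_contra hcon
      push_neg at hcon
      have hcA : mfun botE < c := lt_of_le_of_ne hc1 (fun e => hcon botE e)
      have hcC : c < mfun topE := lt_of_le_of_ne hc2 (fun e => hcon topE e.symm)
      set Sm := Finset.univ.filter (fun v => v < c ∧ ∃ z, mfun z = v) with hSm
      set Sp := Finset.univ.filter (fun v => c < v ∧ ∃ z, mfun z = v) with hSp
      have hSmne : Sm.Nonempty :=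
        ⟨mfun botE, Finset.mem_filter.mpr ⟨Finset.mem_univ _, hcA, botE, rfl⟩⟩
      have hSpne : Sp.Nonempty :=
        ⟨mfun topE, Finset.mem_filter.mpr ⟨Finset.mem_univ _, hcC, topE, rfl⟩⟩
      set vm := Sm.max' hSmne with hvm
      set vp := Sp.min' hSpne with hvp
      obtain ⟨-, hvmc, zm, hzm⟩ := Finset.mem_filter.mp (Sm.max'_mem hSmne)
      obtain ⟨-, hcvp, zp, hzp⟩ := Finset.mem_filter.mp (Sp.min'_mem hSpne)
      rw [← hvm] at hvmc hzm
      rw [← hvp] at hcvp hzp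
      have hmvm : mfun vm = vm := hfix vm zm hzm
      have hmvp : mfun vp = vp := hfix vp zp hzp
      have hflank : ∀ z, mfun z ≤ vm ∨ vp ≤ mfun z := by
        intro z
        rcases lt_trichotomy (mfun z) c with h | h | h
        · left
          exact Finset.le_max' _ _ (Finset.mem_filter.mpr ⟨Finset.mem_univ _, h, z, rfl⟩)
        · exact absurd h (hcon z)
        · right
          exact Finset.min'_le _ _ (Finset.mem_filter.mpr ⟨Finset.mem_univ _, h, z, rfl⟩)
      have hmid : ∀ z, vm < z → z < vp → mfun z = vm ∨ mfun z = vp := by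
        intro z h1 h2
        rcases hflank z with h | h
        · left
          rcases eq_or_lt_of_le h with h' | h'
          · exact h'
          · exact absurd (hbet z vm ⟨zm, hzm⟩ (ne_of_gt h')
              (le_trans (min_le_right _ _) h'.le)
              (le_trans h1.le (le_max_left _ _))) (fun hF => hF)
        · right
          rcases eq_or_lt_of_le h with h' | h'
          · exact h'.symm
          · exact absurd (hbet z vp ⟨zp, hzp⟩ (ne_of_lt h')
              (le_trans (min_le_left _ _) h2.le)
              (le_trans h'.le (le_max_right _ _))) (fun hF => hF)
      -- canonical-profile outcomes
      have houtcome : ∀ Qs : E, f (Function.update (fun j => pick (τ j)) i Qs)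
          = mfun ((Qs.1).top) := by
        intro Qs
        rw [h_fF]
        show F _ = F (Function.update τ i ((Qs.1).top))
        congr 1
        funext j
        by_cases hj : j = i
        · subst hj; simp
        · simp [Function.update_apply, hj, hpick]
      have hoffupd : ∀ (Q1 Q2 : E) (j : Fin N), j ≠ i →
          Function.update (fun j => pick (τ j)) i Q1 j
            = Function.update (fun j => pick (τ j)) i Q2 j := by
        intro Q1 Q2 j hj
        simp [Function.update_apply, hj]
      rcases hmid c hvmc hcvp with hcase | hcase
      · -- mfun c = vm : find the highest z with value vm, its successor has value vp
        set T := Finset.univ.filter (fun z => vm ≤ z ∧ z < vp ∧ mfun z = vm) with hT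
        have hTne : T.Nonempty :=
          ⟨c, Finset.mem_filter.mpr ⟨Finset.mem_univ _, hvmc.le, hcvp, hcase⟩⟩
        set zs := T.max' hTne with hzs
        obtain ⟨-, hzs1, hzs2, hzs3⟩ := Finset.mem_filter.mp (T.max'_mem hTne)
        rw [← hzs] at hzs1 hzs2 hzs3
        have hczs : c ≤ zs := Finset.le_max' _ _
          (Finset.mem_filter.mpr ⟨Finset.mem_univ _, hvmc.le, hcvp, hcase⟩)
        set U := Finset.univ.filter (fun u => zs < u ∧ u ≤ vp) with hU
        have hUne : U.Nonempty :=
          ⟨vp, Finset.mem_filter.mpr ⟨Finset.mem_univ _, hzs2, le_rfl⟩⟩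
        set zp1 := U.min' hUne with hzp1
        obtain ⟨-, hzp1a, hzp1b⟩ := Finset.mem_filter.mp (U.min'_mem hUne)
        rw [← hzp1] at hzp1a hzp1b
        have hadj : AdjL zs zp1 := by
          refine ⟨ne_of_lt hzp1a, fun u hu' => ?_⟩
          rw [min_eq_left hzp1a.le, max_eq_right hzp1a.le] at hu'
          have humem : u ∈ U :=
            Finset.mem_filter.mpr ⟨Finset.mem_univ _, hu'.1, le_trans hu'.2.le hzp1b⟩
          exact absurd (Finset.min'_le _ _ humem) (not_le.mpr hu'.2)
        have hmzp1 : mfun zp1 = vp := by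
          rcases eq_or_lt_of_le hzp1b with h' | h'
          · rw [h']; exact hmvp
          · rcases hmid zp1 (lt_of_le_of_lt hzs1 hzp1a) h' with h'' | h''
            · exfalso
              have : zp1 ∈ T :=
                Finset.mem_filter.mpr ⟨Finset.mem_univ _, le_trans hzs1 hzp1a.le, h', h''⟩
              exact absurd (Finset.le_max' _ _ this) (not_le.mpr hzp1a)
            · exact h''
        obtain ⟨Qc, hQc, Qc', hQc', htc, htc', hkey⟩ := adj_swap_pair hconn hE1 hadj
        have ho1 : f (Function.update (fun j => pick (τ j)) i ⟨Qc, hQc⟩) = vm := by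
          rw [houtcome]
          show mfun Qc.top = vm
          rw [htc, hzs3]
        have ho2 : f (Function.update (fun j => pick (τ j)) i ⟨Qc', hQc'⟩) = vp := by
          rw [houtcome]
          show mfun Qc'.top = vp
          rw [htc', hmzp1]
        have hnev : f (Function.update (fun j => pick (τ j)) i ⟨Qc, hQc⟩)
            ≠ f (Function.update (fun j => pick (τ j)) i ⟨Qc', hQc'⟩) := by
          rw [ho1, ho2]
          exact ne_of_lt (hvmc.trans hcvp)
        obtain ⟨hx, -⟩ := swap_outcome hsp hkey _ _ i (hoffupd _ _)
          (by simp) (by simp) hnev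
        rw [ho1] at hx
        exact absurd hx (ne_of_lt (lt_of_lt_of_le hvmc hczs))
      · -- mfun c = vp : find the lowest z with value vp, its predecessor has value vm
        set T := Finset.univ.filter (fun z => vm < z ∧ z ≤ vp ∧ mfun z = vp) with hT
        have hTne : T.Nonempty :=
          ⟨c, Finset.mem_filter.mpr ⟨Finset.mem_univ _, hvmc, hcvp.le, hcase⟩⟩
        set zs := T.min' hTne with hzs
        obtain ⟨-, hzs1, hzs2, hzs3⟩ := Finset.mem_filter.mp (T.min'_mem hTne)
        rw [← hzs] at hzs1 hzs2 hzs3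
        have hzsc : zs ≤ c := Finset.min'_le _ _
          (Finset.mem_filter.mpr ⟨Finset.mem_univ _, hvmc, hcvp.le, hcase⟩)
        set U := Finset.univ.filter (fun u => vm ≤ u ∧ u < zs) with hU
        have hUne : U.Nonempty :=
          ⟨vm, Finset.mem_filter.mpr ⟨Finset.mem_univ _, le_rfl, hzs1⟩⟩
        set zm1 := U.max' hUne with hzm1
        obtain ⟨-, hzm1a, hzm1b⟩ := Finset.mem_filter.mp (U.max'_mem hUne)
        rw [← hzm1] at hzm1a hzm1b
        have hadj : AdjL zm1 zs := by
          refine ⟨ne_of_lt hzm1b, fun u hu' => ?_⟩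
          rw [min_eq_left hzm1b.le, max_eq_right hzm1b.le] at hu'
          have humem : u ∈ U :=
            Finset.mem_filter.mpr ⟨Finset.mem_univ _, le_trans hzm1a hu'.1.le, hu'.2⟩
          exact absurd (Finset.le_max' _ _ humem) (not_le.mpr hu'.1)
        have hmzm1 : mfun zm1 = vm := by
          rcases eq_or_lt_of_le hzm1a with h' | h'
          · rw [← h']; exact hmvm
          · rcases hmid zm1 h' (lt_of_lt_of_le hzm1b hzs2) with h'' | h''
            · exact h''
            · exfalso
              have : zm1 ∈ T :=
                Finset.mem_filter.mpr ⟨Finset.mem_univ _, h', le_trans hzm1b.le hzs2, h''⟩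
              exact absurd (Finset.min'_le _ _ this) (not_le.mpr hzm1b)
        obtain ⟨Qc, hQc, Qc', hQc', htc, htc', hkey⟩ := adj_swap_pair hconn hE1 hadj
        have ho1 : f (Function.update (fun j => pick (τ j)) i ⟨Qc, hQc⟩) = vm := by
          rw [houtcome]
          show mfun Qc.top = vm
          rw [htc, hmzm1]
        have ho2 : f (Function.update (fun j => pick (τ j)) i ⟨Qc', hQc'⟩) = vp := by
          rw [houtcome]
          show mfun Qc'.top = vp
          rw [htc', hzs3]
        have hnev : f (Function.update (fun j => pick (τ j)) i ⟨Qc, hQc⟩)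
            ≠ f (Function.update (fun j => pick (τ j)) i ⟨Qc', hQc'⟩) := by
          rw [ho1, ho2]
          exact ne_of_lt (hvmc.trans hcvp)
        obtain ⟨-, hy⟩ := swap_outcome hsp hkey _ _ i (hoffupd _ _)
          (by simp) (by simp) hnev
        rw [ho2] at hy
        exact absurd hy (ne_of_gt (lt_of_le_of_lt hzsc hcvp))
    -- conclude the clamp formula
    intro z
    rcases lt_or_ge z (mfun botE) with h | h
    · have h1 : mfun z = mfun botE := by
        by_contra hne
        have hlt : mfun botE < mfun z := lt_of_le_of_ne (hAmin z) (fun e => hne e.symm)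
        exact hbet z (mfun botE) ⟨botE, rfl⟩ (ne_of_lt hlt)
          (le_trans (min_le_left _ _) h.le) (le_trans hlt.le (le_max_right _ _))
      show mfun z = max (mfun botE) (min z (mfun topE))
      rw [h1, min_eq_left (le_trans h.le hAC), max_eq_left h.le]
    · rcases le_or_gt z (mfun topE) with h2 | h2
      · obtain ⟨z', hz'⟩ := hint z h h2
        show mfun z = max (mfun botE) (min z (mfun topE))
        rw [hfix z z' hz', min_eq_left h2, max_eq_right h]
      · have h1 : mfun z = mfun topE := by
          by_contra hne
          have hlt : mfun z < mfun topE := lt_of_le_of_ne (hCmax z) hne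
          exact hbet z (mfun topE) ⟨topE, rfl⟩ (ne_of_gt hlt)
            (le_trans (min_le_right _ _) hlt.le) (le_trans h2.le (le_max_left _ _))
        show mfun z = max (mfun botE) (min z (mfun topE))
        rw [h1, min_eq_right h2.le, max_eq_right hAC]
  -- ballots
  set ind : Finset (Fin N) → (Fin N → β) :=
    fun J => (fun i => if i ∈ J then topE else botE) with hind
  set bal : Finset (Fin N) → β := fun J => F (ind J) with hbal
  have hbbot : bal ∅ = botE := hFun _ botE (by intro i; simp [hind])
  have hbtop : bal Finset.univ = topE := hFun _ topE (by intro i; simp [hind])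
  have hACgen : ∀ (τ : Fin N → β) (i : Fin N),
      F (Function.update τ i botE) ≤ F (Function.update τ i topE) := by
    intro τ i
    have h := claimU τ i topE
    rw [min_eq_right (le_topE _)] at h
    rw [h]
    exact le_max_left _ _
  have hstep : ∀ (J : Finset (Fin N)) (k : Fin N), k ∉ J → bal J ≤ bal (insert k J) := by
    intro J k hk
    have h1 : ind J = Function.update (ind J) k botE := by
      funext j
      by_cases hj : j = k
      · subst hj; simp [hind, hk]
      · simp [Function.update_apply, hj]
    have h2 : ind (insert k J) = Function.update (ind J) k topE := by
      funext j
      by_cases hj : j = k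
      · subst hj; simp [hind]
      · simp [hind, Function.update_apply, hj, Finset.mem_insert]
    show F (ind J) ≤ F (ind (insert k J))
    rw [h1, h2]
    exact hACgen (ind J) k
  have hmono : ∀ J J' : Finset (Fin N), J ⊆ J' → bal J ≤ bal J' := by
    have key : ∀ (d : ℕ) (J J' : Finset (Fin N)), J ⊆ J' → (J' \ J).card = d →
        bal J ≤ bal J' := by
      intro d
      induction d with
      | zero =>
        intro J J' hsub hd
        have h1 : J' \ J = ∅ := Finset.card_eq_zero.mp hd
        have h2 : J = J' := by
          apply Finset.Subset.antisymm hsub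
          intro x hx
          by_contra hxx
          have : x ∈ J' \ J := Finset.mem_sdiff.mpr ⟨hx, hxx⟩
          rw [h1] at this
          simp at this
        rw [h2]
      | succ d ih =>
        intro J J' hsub hd
        have hne : (J' \ J).Nonempty := Finset.card_pos.mp (by omega)
        obtain ⟨k, hk⟩ := hne
        obtain ⟨hk1, hk2⟩ := Finset.mem_sdiff.mp hk
        refine le_trans (hstep J k hk2) (ih (insert k J) J' ?_ ?_)
        · intro x hx
          rcases Finset.mem_insert.mp hx with rfl | hx
          · exact hk1
          · exact hsub hx
        · rw [Finset.sdiff_insert J' J k, Finset.card_erase_of_mem hk]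
          omega
    exact fun J J' h => key _ J J' h rfl
  -- extreme-profile values
  have hextreme : ∀ T : Finset (Fin N), fbrValue lo bal (ind T) = bal T := by
    intro T
    rw [fbrValue_eq_sup']
    apply le_antisymm
    · apply Finset.sup'_le
      intro J _
      by_cases hJT : J ⊆ T
      · exact le_trans (Finset.inf'_le id (Finset.mem_insert_self _ _)) (hmono J T hJT)
      · obtain ⟨k, hkJ, hkT⟩ := Finset.not_subset.mp hJT
        refine le_trans (Finset.inf'_le id (Finset.mem_insert_of_mem
          (Finset.mem_image.mpr ⟨k, hkJ, rfl⟩))) ?_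
        have h1 : ind T k = botE := by simp [hind, hkT]
        show id (ind T k) ≤ bal T
        rw [id_eq, h1]
        exact botE_le _
    · refine le_trans ?_ (Finset.le_sup' _ (Finset.mem_univ T))
      apply Finset.le_inf'
      intro b hb
      rcases Finset.mem_insert.mp hb with rfl | hb
      · exact le_rfl
      · obtain ⟨k, hkT, rfl⟩ := Finset.mem_image.mp hb
        have h1 : ind T k = topE := by simp [hind, hkT]
        show bal T ≤ id (ind T k)
        rw [id_eq, h1]
        exact le_topE _
  -- the general formula
  have hformula : ∀ τ : Fin N → β, F τ = fbrValue lo bal τ := by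
    have key : ∀ (d : ℕ) (τ : Fin N → β),
        (Finset.univ.filter (fun i => τ i ≠ botE ∧ τ i ≠ topE)).card = d →
        F τ = fbrValue lo bal τ := by
      intro d
      induction d with
      | zero =>
        intro τ hd
        have hext : ∀ i, τ i = botE ∨ τ i = topE := by
          intro i
          by_contra hcon
          push_neg at hcon
          have : i ∈ Finset.univ.filter (fun i => τ i ≠ botE ∧ τ i ≠ topE) :=
            Finset.mem_filter.mpr ⟨Finset.mem_univ _, hcon.1, hcon.2⟩
          have h2 := Finset.card_pos.mpr ⟨i, this⟩
          omega
        have hτT : τ = ind (Finset.univ.filter (fun i => τ i = topE)) := by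
          funext i
          show τ i = if i ∈ Finset.univ.filter (fun i => τ i = topE) then topE else botE
          by_cases hi : i ∈ Finset.univ.filter (fun i => τ i = topE)
          · rw [if_pos hi]
            exact (Finset.mem_filter.mp hi).2
          · rw [if_neg hi]
            rcases hext i with h | h
            · exact h
            · exact absurd (Finset.mem_filter.mpr ⟨Finset.mem_univ i, h⟩) hi
        rw [hτT, hextreme]
      | succ d ih =>
        intro τ hd
        have hne : (Finset.univ.filter (fun i => τ i ≠ botE ∧ τ i ≠ topE)).Nonempty :=
          Finset.card_pos.mp (by omega)
        obtain ⟨i, hi⟩ := hne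
        obtain ⟨-, hib, hit⟩ := Finset.mem_filter.mp hi
        have hcard : ∀ w : β, (w = botE ∨ w = topE) →
            (Finset.univ.filter (fun j =>
              Function.update τ i w j ≠ botE ∧ Function.update τ i w j ≠ topE)).card = d := by
          intro w hw
          have hset : Finset.univ.filter (fun j =>
              Function.update τ i w j ≠ botE ∧ Function.update τ i w j ≠ topE)
              = (Finset.univ.filter (fun i => τ i ≠ botE ∧ τ i ≠ topE)).erase i := by
            ext j
            rw [Finset.mem_filter, Finset.mem_erase, Finset.mem_filter]
            by_cases hj : j = i
            · subst hj
              simp only [Function.update_self]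
              rcases hw with rfl | rfl
              · simp
              · simp
            · simp [Function.update_apply, hj]
          rw [hset, Finset.card_erase_of_mem hi]
          omega
        have h1 : F τ = max (F (Function.update τ i botE))
            (min (τ i) (F (Function.update τ i topE))) := by
          conv_lhs => rw [← Function.update_eq_self i τ]
          exact claimU τ i (τ i)
        have h2 := (fbrValue_update bal (fun J J' h => hmono J J' h.subset) τ i (τ i)).1
        rw [Function.update_eq_self i τ] at h2
        rw [h1, ih _ (hcard botE (Or.inl rfl)), ih _ (hcard topE (Or.inr rfl)), ← h2]
    intro τ
    exact key _ τ rfl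
  refine ⟨bal, ⟨hbbot, hbtop, fun J J' h => hmono J J' h.subset⟩, ?_⟩
  intro p
  rw [h_fF p, hformula]

end BuildFBR

section Master2

variable {β : Type u} [Fintype β] [Nonempty β] [lo : LinearOrder β]
variable {E : Set (Pref β)}

theorem noStraddle {m : ℕ} {f : (Fin (m + 2) → E) → β}
    (hE1 : ∀ Q ∈ E, SP1 Q)
    (pick : β → E) (hpick : ∀ z, ((pick z).1).top = z)
    (hu : Unanimous E f) (hsp : StrategyProof E f)
    (IH : ∀ g : (Fin (m + 1) → E) → β, Unanimous E g → StrategyProof E g → IsFBR lo E g)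
    (p q : Fin (m + 2) → E) (i : Fin (m + 2)) (hpq : ∀ j, j ≠ i → p j = q j)
    (htop : ((p i).1).top = ((q i).1).top) : f p = f q := by
  classical
  set σ : Equiv.Perm (Fin (m + 2)) := Equiv.swap i 0 with hσ
  have hswap : ∀ k, σ (σ k) = k := fun k => Equiv.swap_apply_self i 0 k
  have hσi : σ i = 0 := Equiv.swap_apply_left i 0
  have hσ0 : σ 0 = i := Equiv.swap_apply_right i 0
  set f' : (Fin (m + 2) → E) → β := fun r => f (fun k => r (σ k)) with hf'
  have hf'u : Unanimous E f' := fun r a htops => hu _ a (fun k => htops (σ k))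
  have hf'sp : StrategyProof E f' := by
    intro r l Q hne
    have hkey : (fun k => (Function.update r l Q) (σ k))
        = Function.update (fun k => r (σ k)) (σ l) Q := by
      funext k
      by_cases hk : k = σ l
      · subst hk
        rw [hswap l, Function.update_self, Function.update_self]
      · have h1 : σ k ≠ l := fun h => hk (by rw [← h, hswap])
        rw [Function.update_of_ne h1, Function.update_of_ne hk]
    show (r l).1.rel (f' r) (f' (Function.update r l Q))
    have h2 : f' (Function.update r l Q)
        = f (Function.update (fun k => r (σ k)) (σ l) Q) := by
      show f (fun k => (Function.update r l Q) (σ k)) = _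
      rw [hkey]
    rw [h2] at hne ⊢
    have h3 := hsp (fun k => r (σ k)) (σ l) Q hne
    simp only [hswap] at h3
    exact h3
  have hpq' : ∀ j, j ≠ (0 : Fin (m + 2)) → (fun v => p (σ v)) j = (fun v => q (σ v)) j := by
    intro j hj
    have hji : σ j ≠ i := by
      intro h
      apply hj
      have := congrArg σ h
      rwa [hswap, hσi] at this
    exact hpq (σ j) hji
  have htop' : (((fun v => p (σ v)) 0).1).top = (((fun v => q (σ v)) 0).1).top := by
    show ((p (σ 0)).1).top = ((q (σ 0)).1).top
    rw [hσ0]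
    exact htop
  have hres := noStraddle0 hE1 pick hpick hf'u hf'sp IH
    (fun v => p (σ v)) (fun v => q (σ v)) hpq' htop'
  have e1 : f' (fun v => p (σ v)) = f p := by
    show f (fun k => p (σ (σ k))) = f p
    congr 1
    funext k
    rw [hswap]
  have e2 : f' (fun v => q (σ v)) = f q := by
    show f (fun k => q (σ (σ k))) = f q
    congr 1
    funext k
    rw [hswap]
  rw [e1, e2] at hres
  exact hres

theorem topsOnly_of_noStraddle {N : ℕ} {f : (Fin N → E) → β}
    (hns : ∀ (p q : Fin N → E) (i : Fin N), (∀ j, j ≠ i → p j = q j) →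
      ((p i).1).top = ((q i).1).top → f p = f q)
    (p q : Fin N → E) (htops : ∀ i, ((p i).1).top = ((q i).1).top) : f p = f q := by
  classical
  have step : ∀ k : ℕ, k ≤ N → f p = f (fun j => if (j : ℕ) < k then q j else p j) := by
    intro k
    induction k with
    | zero =>
      intro _
      have h : (fun j : Fin N => if (j : ℕ) < 0 then q j else p j) = p := by
        funext j; simp
      rw [h]
    | succ k ih =>
      intro hk
      have hkN : k < N := hk
      rw [ih (Nat.le_of_succ_le hk)]
      apply hns _ _ ⟨k, hkN⟩
      · intro j hj
        have hjk : (j : ℕ) ≠ k := fun e => hj (Fin.ext e)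
        by_cases h : (j : ℕ) < k
        · simp [h, Nat.lt_succ_of_lt h]
        · have h2 : ¬(j : ℕ) < k + 1 := by omega
          simp [h, h2]
      · show ((if ((⟨k, hkN⟩ : Fin N) : ℕ) < k then q _ else p _).1).top
          = ((if ((⟨k, hkN⟩ : Fin N) : ℕ) < k + 1 then q _ else p _).1).top
        rw [if_neg (by simp), if_pos (by simp)]
        exact htops _
  have hend := step N le_rfl
  have h : (fun j : Fin N => if (j : ℕ) < N then q j else p j) = q := by
    funext j; simp [j.isLt]
  rw [hend, h]

/-- The master theorem: forward direction. -/
theorem master_fwd (hcard : 2 ≤ Fintype.card β)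
    (hE1 : ∀ Q ∈ E, SP1 Q)
    (hconn : GraphConnectedOn (scEdge E) Set.univ)
    (pick : β → E) (hpick : ∀ z, ((pick z).1).top = z) :
    ∀ n : ℕ, 1 ≤ n → ∀ f : (Fin n → E) → β,
      Unanimous E f → StrategyProof E f → IsFBR lo E f := by
  intro n hn
  induction n, hn using Nat.le_induction with
  | base =>
    intro f hu hsp
    apply build_fbr hconn hE1 pick hpick hu hsp
    intro p q htops
    have h1 : f p = ((p 0).1).top := hu p _ (fun i => by rw [Subsingleton.elim i 0])
    have h2 : f q = ((q 0).1).top := hu q _ (fun i => by rw [Subsingleton.elim i 0])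
    rw [h1, h2, htops 0]
  | succ n hn ih =>
    intro f hu hsp
    obtain ⟨m, rfl⟩ : ∃ m, n = m + 1 := ⟨n - 1, by omega⟩
    apply build_fbr hconn hE1 pick hpick hu hsp
    apply topsOnly_of_noStraddle
    intro p q i hpq htop
    exact noStraddle hE1 pick hpick hu hsp ih p q i hpq htop

/-- The master characterization theorem. -/
theorem master (hcard : 2 ≤ Fintype.card β)
    (hE1 : ∀ Q ∈ E, SP1 Q)
    (hconn : GraphConnectedOn (scEdge E) Set.univ)
    {n : ℕ} (hn : 1 ≤ n) (f : (Fin n → E) → β) :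
    (Unanimous E f ∧ StrategyProof E f) ↔ IsFBR lo E f := by
  classical
  have hpickex : ∀ z : β, ∃ Q : E, ((Q : Pref β)).top = z := by
    intro z
    obtain ⟨Q, hQ, ht⟩ := exists_top_pref hconn hcard z
    exact ⟨⟨Q, hQ⟩, ht⟩
  choose pick hpick using hpickex
  constructor
  · rintro ⟨hu, hsp⟩
    exact master_fwd hcard hE1 hconn pick hpick n hn f hu hsp
  · exact fun h => isFBR_implies hE1 f h

end Master2

section Translate

theorem Pref.marg_top {m : ℕ} {A : Fin m → Type u} [∀ s, Fintype (A s)]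
    [∀ s, Nonempty (A s)] (P : Pref (∀ s, A s)) (s : Fin m) :
    (P.marg s).top = P.top s := by
  apply Pref.top_unique
  intro y hy
  show P.rel (Function.update P.top s (P.top s)) (Function.update P.top s y)
  rw [Function.update_eq_self]
  refine P.top_spec _ (fun h => hy ?_)
  have := congrFun h s
  rwa [Function.update_self] at this

end Translate

/-- On a multidimensional hybrid domain, for a component whose marginal
thresholds coincide, strategy-proof unanimous marginal rules are exactly the FBRs. -/
theorem stmt_2 {m : ℕ} (hm : 2 ≤ m) {A : Fin m → Type u}
    [∀ s, Fintype (A s)] [∀ s, Nonempty (A s)]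
    (hcard : ∀ s, 2 ≤ Fintype.card (A s))
    (D : Set (Pref (∀ s, A s)))
    (prec : ∀ s, LinearOrder (A s)) (xlo xhi : ∀ s, A s)
    (hMDH : MDHybridDomain D prec xlo xhi)
    (s : Fin m) (hs : xlo s = xhi s)
    (n : ℕ) (hn : 2 ≤ n)
    (f : (Fin n → (margDomain D s)) → A s) :
    (Unanimous (margDomain D s) f ∧ StrategyProof (margDomain D s) f) ↔
      IsFBR (prec s) (margDomain D s) f := by
  classical
  obtain ⟨hthr, hhyb, hgraph⟩ := hMDH
  letI : LinearOrder (A s) := prec s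
  have hE1 : ∀ Q ∈ margDomain D s, SP1 Q := by
    rintro Q ⟨P, hP, rfl⟩
    intro x y hxy h1 h2
    rw [Pref.marg_top] at h1 h2
    show P.rel (Function.update P.top s x) (Function.update P.top s y)
    have hsim : SimilarAt (Function.update P.top s x) (Function.update P.top s y) s := by
      constructor
      · simpa using hxy
      · intro t ht
        rw [Function.update_of_ne ht, Function.update_of_ne ht]
    have hmd := hhyb P hP s _ _ hsim
    by_cases hx : x = P.top s
    · apply hmd.1
      rw [Function.update_self]
      exact hx
    · apply hmd.2
      · rw [Function.update_self, Function.update_self]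
        rcases lt_trichotomy (Pref.top P s) y with hty | hty | hty
        · rw [min_eq_left hty.le] at h1
          rw [max_eq_right hty.le] at h2
          exact Or.inl ⟨lt_of_le_of_ne h1 (fun e => hx e.symm), lt_of_le_of_ne h2 hxy⟩
        · exfalso
          rw [← hty] at hxy h1 h2
          rw [min_self] at h1
          rw [max_self] at h2
          exact hx (le_antisymm h2 h1)
        · rw [min_eq_right hty.le] at h1
          rw [max_eq_left hty.le] at h2
          exact Or.inr ⟨lt_of_le_of_ne h1 (fun e => hxy e.symm),
            lt_of_le_of_ne h2 hx⟩
      · rw [Function.update_self]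
        intro hmem
        rcases hmem with ⟨ha, hb⟩ | ⟨ha, hb⟩
        · rw [hs] at ha
          exact absurd (ha.trans hb) (lt_irrefl _)
        · rw [hs] at hb
          exact absurd (ha.trans hb) (lt_irrefl _)
  have hconn := (hgraph s).1
  exact master (hcard s) hE1 hconn (by omega) f
end
end

section
/- Let D be a rich domain that is a decomposable domain. Then for all n ≥ 2, every strategy-proof unanimous rule f : D^n → A satisfies the tops-only property. -/
noncomputable section

universe u

section RankLemmas

variable {α : Type u}

theorem Pref.rel_irrefl (P : Pref α) (a : α) : ¬ P.rel a a :=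
  fun h => P.asymm a a h h

theorem Pref.rel_iff_rank_lt_s6 [Finite α] (P : Pref α) (u v : α) :
    P.rel u v ↔ P.rank u < P.rank v := by
  constructor
  · intro h
    have hsub : {b | P.rel b u} ⊂ {b | P.rel b v} := by
      constructor
      · intro b hb
        exact P.trans b u v hb h
      · intro hle
        exact P.rel_irrefl u (hle (by exact h : u ∈ {b | P.rel b v}))
    have := Set.ncard_lt_ncard hsub (Set.toFinite _)
    simpa [Pref.rank] using this
  · intro h
    by_contra hnr
    have huv : u ≠ v := by rintro rfl; exact lt_irrefl _ h
    rcases P.total u v huv with h' | h'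
    · exact hnr h'
    · have hsub : {b | P.rel b v} ⊂ {b | P.rel b u} := by
        constructor
        · intro b hb
          exact P.trans b v u hb h'
        · intro hle
          exact P.rel_irrefl v (hle (by exact h' : v ∈ {b | P.rel b u}))
      have := Set.ncard_lt_ncard hsub (Set.toFinite _)
      have : P.rank v < P.rank u := by simpa [Pref.rank] using this
      omega

theorem Pref.rank_injective_s6 [Finite α] (P : Pref α) {u v : α}
    (h : P.rank u = P.rank v) : u = v := by
  by_contra hne
  rcases P.total u v hne with h' | h'
  · have := (P.rel_iff_rank_lt_s6 u v).mp h'; omega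
  · have := (P.rel_iff_rank_lt_s6 v u).mp h'; omega

theorem Pref.top_unique_s6 [Finite α] [Nonempty α] (P : Pref α) {u : α}
    (h : ∀ b, b ≠ u → P.rel u b) : u = P.top := by
  by_contra hne
  exact P.asymm _ _ (h P.top (fun hh => hne hh.symm)) (P.top_spec u hne)

end RankLemmas

section TopMarg

variable {m : ℕ} {A : Fin m → Type u} [∀ s, Fintype (A s)] [∀ s, Nonempty (A s)]

theorem Pref.top_marg (P : Pref (∀ s, A s)) (s : Fin m) :
    (P.marg s).top = P.top s := by
  refine ((P.marg s).top_unique_s6 (fun c hc => ?_)).symm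
  show P.rel (Function.update P.top s (P.top s)) (Function.update P.top s c)
  rw [Function.update_eq_self]
  refine P.top_spec _ (fun h => hc ?_)
  have := congrFun h s
  simpa using this

end TopMarg
set_option linter.unusedSectionVars false

section FlipLemmas

variable {β : Type u} [Finite β]

theorem adjacent_flip {P P' : Pref β} {a b : β}
    (hb : P.rank b = P.rank a + 1) (hb' : P'.rank b = P.rank a)
    (ha' : P'.rank a = P.rank a + 1)
    (hoff : ∀ c, c ≠ a → c ≠ b → P.rank c = P'.rank c)
    {u v : β} (h1 : P.rel u v) (h2 : P'.rel v u) : u = a ∧ v = b := by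
  have r1 := (P.rel_iff_rank_lt_s6 u v).mp h1
  have r2 := (P'.rel_iff_rank_lt_s6 v u).mp h2
  by_cases hua : u = a
  · subst hua
    by_cases hvb : v = b
    · exact ⟨rfl, hvb⟩
    · by_cases hva : v = u
      · subst hva; omega
      · rw [hoff v hva hvb] at r1; omega
  · by_cases hub : u = b
    · subst hub
      by_cases hva : v = a
      · subst hva; omega
      · by_cases hvb : v = u
        · subst hvb; omega
        · rw [hoff v hva hvb] at r1; omega
    · rw [hoff u hua hub] at r1
      by_cases hva : v = a
      · subst hva; omega
      · by_cases hvb : v = b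
        · subst hvb; omega
        · rw [hoff v hva hvb] at r1; omega

theorem Adjacent.symm {P P' : Pref β} (h : Adjacent P P') : Adjacent P' P := by
  obtain ⟨a, b, hab, hb, hb', ha', hoff⟩ := h
  exact ⟨b, a, hab.symm, by omega, by omega, by omega,
    fun c h1 h2 => (hoff c h2 h1).symm⟩

end FlipLemmas

section PlusLemmas

variable {m : ℕ} {A : Fin m → Type u} [∀ s, Fintype (A s)] [∀ s, Nonempty (A s)]

theorem upd_self_of_eq {s : Fin m} (e : ∀ t, A t) {c : A s} (hc : e s = c) :
    Function.update e s c = e := by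
  rw [← hc]; exact Function.update_eq_self s e

theorem plus_flip {P P' : Pref (∀ s, A s)} {s : Fin m} {a b : A s}
    (hranks : ∀ z, P.rank (Function.update z s b) = P.rank (Function.update z s a) + 1 ∧
      P'.rank (Function.update z s b) = P.rank (Function.update z s a) ∧
      P'.rank (Function.update z s a) = P.rank (Function.update z s a) + 1)
    (hoff : ∀ c, c s ≠ a → c s ≠ b → P.rank c = P'.rank c)
    {u v : ∀ t, A t} (h1 : P.rel u v) (h2 : P'.rel v u) :
    u = Function.update v s a ∧ v s = b := by
  have r1 := (P.rel_iff_rank_lt_s6 u v).mp h1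
  have r2 := (P'.rel_iff_rank_lt_s6 v u).mp h2
  -- facts for elements in the a-class
  have fa : ∀ e : ∀ t, A t, e s = a → P'.rank e = P.rank e + 1 := by
    intro e he
    have := (hranks e).2.2
    rwa [upd_self_of_eq e he] at this
  have fb : ∀ e : ∀ t, A t, e s = b →
      P'.rank e = P.rank (Function.update e s a) ∧
      P.rank e = P.rank (Function.update e s a) + 1 := by
    intro e he
    have h1' := (hranks e).1
    have h2' := (hranks e).2.1
    rw [upd_self_of_eq e he] at h1' h2'
    exact ⟨h2', h1'⟩
  by_cases hua : u s = a
  · by_cases hvb : v s = b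
    · -- the surviving case
      have hu' := fa u hua
      obtain ⟨hv1, hv2⟩ := fb v hvb
      have : P.rank u = P.rank (Function.update v s a) := by omega
      exact ⟨P.rank_injective_s6 this, hvb⟩
    · by_cases hva : v s = a
      · have := fa u hua; have := fa v hva; omega
      · have := fa u hua; rw [hoff v hva hvb] at r1; omega
  · by_cases hub : u s = b
    · obtain ⟨hu1, hu2⟩ := fb u hub
      by_cases hva : v s = a
      · have := fa v hva; omega
      · by_cases hvb : v s = b
        · obtain ⟨hv1, hv2⟩ := fb v hvb; omega
        · rw [hoff v hva hvb] at r1; omega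
    · rw [hoff u hua hub] at r1
      by_cases hva : v s = a
      · have := fa v hva; omega
      · by_cases hvb : v s = b
        · obtain ⟨hv1, hv2⟩ := fb v hvb; omega
        · rw [hoff v hva hvb] at r1; omega

theorem plus_rel_pairs {P P' : Pref (∀ s, A s)} {s : Fin m} {a b : A s}
    (hranks : ∀ z, P.rank (Function.update z s b) = P.rank (Function.update z s a) + 1 ∧
      P'.rank (Function.update z s b) = P.rank (Function.update z s a) ∧
      P'.rank (Function.update z s a) = P.rank (Function.update z s a) + 1) :
    ∀ z, P.rel (Function.update z s a) (Function.update z s b) ∧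
      P'.rel (Function.update z s b) (Function.update z s a) := by
  intro z
  obtain ⟨h1, h2, h3⟩ := hranks z
  constructor
  · rw [P.rel_iff_rank_lt_s6]; omega
  · rw [P'.rel_iff_rank_lt_s6]; omega

theorem AdjacentPlus.symm {P P' : Pref (∀ s, A s)} (h : AdjacentPlus P P') :
    AdjacentPlus P' P := by
  obtain ⟨hsep, hsep', s, a, b, hab, hranks, hoff⟩ := h
  refine ⟨hsep', hsep, s, b, a, hab.symm, fun z => ?_, fun c h1 h2 => (hoff c h2 h1).symm⟩
  obtain ⟨h1, h2, h3⟩ := hranks z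
  exact ⟨by omega, by omega, by omega⟩

theorem AdjEdge.symm {P P' : Pref (∀ s, A s)} (h : AdjEdge P P') : AdjEdge P' P := by
  rcases h with h | h
  · exact Or.inl h.symm
  · exact Or.inr h.symm

end PlusLemmas
section MainA

variable {m : ℕ} {A : Fin m → Type u} [∀ s, Fintype (A s)] [∀ s, Nonempty (A s)]
variable {D : Set (Pref (∀ s, A s))} {n : ℕ}
variable {f : (Fin n → D) → (∀ s, A s)}
variable {g : ∀ s : Fin m, (Fin n → (margDomain D s)) → A s}

set_option maxHeartbeats 1000000 in
theorem lemA (hrichMin : MinimallyRich D) (hdec : DecomposableDomain D) (hn : 2 ≤ n)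
    (hdecomp : Decomposable D f g)
    (hg : ∀ s, Unanimous (margDomain D s) (g s) ∧ StrategyProof (margDomain D s) (g s))
    (p : Fin n → D) (i : Fin n) (N' : D) (s : Fin m)
    (hne : f p s ≠ f (Function.update p i N') s) (w : ∀ t, A t) :
    (p i).1.rel (Function.update w s (f p s))
      (Function.update w s (f (Function.update p i N') s)) := by
  classical
  obtain ⟨Rw, hRwD, hRwtop⟩ := hrichMin w
  set G : ∀ t : Fin m, (Fin (n+1) → (margDomain D t)) → A t :=
    Function.update (fun t (q : Fin (n+1) → (margDomain D t)) => Pref.top (q (Fin.last n)).1)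
      s (fun q => g s (fun k => q k.castSucc)) with hG
  have hGs : G s = fun q => g s (fun k => q k.castSucc) := by
    rw [hG]; exact Function.update_self _ _ _
  have hGt : ∀ t, t ≠ s →
      G t = fun (q : Fin (n+1) → (margDomain D t)) => Pref.top (q (Fin.last n)).1 := by
    intro t ht; rw [hG]; exact Function.update_of_ne ht _ _
  set F : (Fin (n+1) → D) → (∀ t, A t) := fun pp t => G t (margProfile D t pp) with hF
  have castSucc_ne_last : ∀ k : Fin n, k.castSucc ≠ Fin.last n :=
    fun k => ne_of_lt (Fin.castSucc_lt_last k)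
  have hFprop : Unanimous D F ∧ StrategyProof D F := by
    refine (hdec (n+1) (by omega) F).mpr ⟨G, fun pp t => rfl, ?_⟩
    intro t
    by_cases ht : t = s
    · subst ht
      rw [hGs]
      constructor
      · intro q a htops
        exact (hg t).1 (fun k => q k.castSucc) a (fun k => htops _)
      · intro q j Q hne'
        rcases Fin.eq_castSucc_or_eq_last j with ⟨j₀, rfl⟩ | rfl
        · have hrw : (fun k : Fin n => Function.update q j₀.castSucc Q k.castSucc)
              = Function.update (fun k : Fin n => q k.castSucc) j₀ Q := by
            funext k
            by_cases hk : k = j₀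
            · subst hk; simp
            · rw [Function.update_of_ne (fun hh => hk (Fin.castSucc_injective _ hh)),
                Function.update_of_ne hk]
          beta_reduce at hne' ⊢
          rw [hrw] at hne' ⊢
          exact (hg t).2 (fun k => q k.castSucc) j₀ Q hne'
        · have hrw : (fun k : Fin n => Function.update q (Fin.last n) Q k.castSucc)
              = fun k : Fin n => q k.castSucc := by
            funext k
            rw [Function.update_of_ne (castSucc_ne_last k)]
          beta_reduce at hne'
          rw [hrw] at hne'
          exact absurd rfl hne'
    · rw [hGt t ht]
      constructor
      · intro q a htops; exact htops _
      · intro q j Q hne'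
        beta_reduce at hne' ⊢
        by_cases hj : j = Fin.last n
        · subst hj
          rw [Function.update_self] at hne' ⊢
          exact Pref.top_spec _ _ (Ne.symm hne')
        · rw [Function.update_of_ne (Ne.symm hj)] at hne'
          exact absurd rfl hne'
  set pp : Fin (n+1) → D := Fin.snoc p ⟨Rw, hRwD⟩ with hpp
  have hppc : ∀ k : Fin n, pp k.castSucc = p k := by
    intro k; rw [hpp]; exact Fin.snoc_castSucc _ _ _
  have hppl : pp (Fin.last n) = ⟨Rw, hRwD⟩ := by
    rw [hpp]; exact Fin.snoc_last _ _
  set pp' : Fin (n+1) → D := Function.update pp (Fin.castSucc i) N' with hpp'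
  have hppc' : ∀ k : Fin n, pp' k.castSucc = Function.update p i N' k := by
    intro k
    by_cases hk : k = i
    · subst hk; rw [hpp', Function.update_self, Function.update_self]
    · rw [hpp', Function.update_of_ne (fun hh => hk (Fin.castSucc_injective _ hh)),
        Function.update_of_ne hk, hppc]
  have hppl' : pp' (Fin.last n) = ⟨Rw, hRwD⟩ := by
    rw [hpp', Function.update_of_ne (Ne.symm (castSucc_ne_last i)), hppl]
  have hvalgen : ∀ (qq : Fin (n+1) → D) (q : Fin n → D),
      (∀ k, qq k.castSucc = q k) → qq (Fin.last n) = ⟨Rw, hRwD⟩ →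
      F qq = Function.update w s (f q s) := by
    intro qq q hc hl
    funext t
    by_cases ht : t = s
    · subst ht
      show G t (margProfile D t qq) = _
      rw [hGs, Function.update_self]
      have : (fun k : Fin n => margProfile D t qq k.castSucc) = margProfile D t q := by
        funext k
        simp only [margProfile]
        refine Subtype.ext ?_
        show Pref.marg (qq k.castSucc).1 t = Pref.marg (q k).1 t
        rw [hc k]
      show g t (fun k => margProfile D t qq k.castSucc) = f q t
      rw [this, ← hdecomp q t]
    · show G t (margProfile D t qq) = _
      rw [hGt t ht, Function.update_of_ne ht]
      show Pref.top ((margProfile D t qq) (Fin.last n)).1 = w t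
      simp only [margProfile]
      rw [hl]
      show Pref.top (Pref.marg Rw t) = w t
      rw [Pref.top_marg, hRwtop]
  have hval : F pp = Function.update w s (f p s) := hvalgen pp p hppc hppl
  have hval' : F pp' = Function.update w s (f (Function.update p i N') s) :=
    hvalgen pp' (Function.update p i N') hppc' hppl'
  have hFne : F pp ≠ F pp' := by
    rw [hval, hval']
    intro h
    apply hne
    have := congrFun h s
    simpa using this
  have hFne2 : F pp ≠ F (Function.update pp (Fin.castSucc i) N') := by
    rw [← hpp']; exact hFne
  have hsp' := hFprop.2 pp (Fin.castSucc i) N' hFne2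
  rw [← hpp', hval, hval'] at hsp'
  rw [hppc i] at hsp'
  exact hsp'

end MainA
section MainB

variable {m : ℕ} {A : Fin m → Type u} [∀ s, Fintype (A s)] [∀ s, Nonempty (A s)]
variable {D : Set (Pref (∀ s, A s))} {n : ℕ}
variable {f : (Fin n → D) → (∀ s, A s)}
variable {g : ∀ s : Fin m, (Fin n → (margDomain D s)) → A s}

theorem lemA' (hrichMin : MinimallyRich D) (hdec : DecomposableDomain D) (hn : 2 ≤ n)
    (hdecomp : Decomposable D f g)
    (hg : ∀ s, Unanimous (margDomain D s) (g s) ∧ StrategyProof (margDomain D s) (g s))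
    (p : Fin n → D) (i : Fin n) (N' : D) (s : Fin m)
    (hne : f p s ≠ f (Function.update p i N') s) (w : ∀ t, A t) :
    N'.1.rel (Function.update w s (f (Function.update p i N') s))
      (Function.update w s (f p s)) := by
  have hupd : Function.update (Function.update p i N') i (p i) = p := by
    rw [Function.update_idem]; exact Function.update_eq_self i p
  have h2 : f (Function.update p i N') s ≠
      f (Function.update (Function.update p i N') i (p i)) s := by
    rw [hupd]; exact hne.symm
  have := lemA hrichMin hdec hn hdecomp hg (Function.update p i N') i (p i) s h2 w
  rw [hupd] at this
  rwa [Function.update_self] at this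

theorem edge_adj_inert (hm : 2 ≤ m) (hcard : ∀ s, 2 ≤ Fintype.card (A s))
    (hrichMin : MinimallyRich D) (hdec : DecomposableDomain D) (hn : 2 ≤ n)
    (hdecomp : Decomposable D f g)
    (hg : ∀ s, Unanimous (margDomain D s) (g s) ∧ StrategyProof (margDomain D s) (g s))
    (p : Fin n → D) (i : Fin n) (N' : D) (hAdj : Adjacent (p i).1 N'.1) :
    f p = f (Function.update p i N') := by
  classical
  by_contra hne
  have hex : ∃ s, f p s ≠ f (Function.update p i N') s := by
    by_contra h; push_neg at h; exact hne (funext h)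
  obtain ⟨s, hs⟩ := hex
  obtain ⟨t₀, ht₀⟩ := Fintype.exists_ne_of_one_lt_card
    (by rw [Fintype.card_fin]; omega : 1 < Fintype.card (Fin m)) s
  have w₁ : ∀ t, A t := Classical.arbitrary _
  obtain ⟨c', hc'⟩ := Fintype.exists_ne_of_one_lt_card (hcard t₀) (w₁ t₀)
  obtain ⟨a, b, hab, hb, hb', ha', hoff⟩ := hAdj
  have f1 := lemA hrichMin hdec hn hdecomp hg p i N' s hs w₁
  have f1' := lemA' hrichMin hdec hn hdecomp hg p i N' s hs w₁
  have f2 := lemA hrichMin hdec hn hdecomp hg p i N' s hs (Function.update w₁ t₀ c')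
  have f2' := lemA' hrichMin hdec hn hdecomp hg p i N' s hs (Function.update w₁ t₀ c')
  have e1 := adjacent_flip hb hb' ha' hoff f1 f1'
  have e2 := adjacent_flip hb hb' ha' hoff f2 f2'
  have heq : Function.update w₁ s (f p s)
      = Function.update (Function.update w₁ t₀ c') s (f p s) := by
    rw [e1.1, e2.1]
  have hev := congrFun heq t₀
  rw [Function.update_of_ne ht₀, Function.update_of_ne ht₀, Function.update_self] at hev
  exact hc' hev.symm

theorem edge_plus_form (hrichMin : MinimallyRich D) (hdec : DecomposableDomain D)
    (hn : 2 ≤ n) (hdecomp : Decomposable D f g)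
    (hg : ∀ s, Unanimous (margDomain D s) (g s) ∧ StrategyProof (margDomain D s) (g s))
    (p : Fin n → D) (i : Fin n) (N' : D) {s' : Fin m} {γ δ : A s'} (hγδ : γ ≠ δ)
    (hranks : ∀ z, (p i).1.rank (Function.update z s' δ)
        = (p i).1.rank (Function.update z s' γ) + 1 ∧
      N'.1.rank (Function.update z s' δ) = (p i).1.rank (Function.update z s' γ) ∧
      N'.1.rank (Function.update z s' γ) = (p i).1.rank (Function.update z s' γ) + 1)
    (hoff : ∀ c, c s' ≠ γ → c s' ≠ δ → (p i).1.rank c = N'.1.rank c)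
    (hne : f p ≠ f (Function.update p i N')) :
    f p s' = γ ∧ f (Function.update p i N') s' = δ ∧
      ∀ t, t ≠ s' → f p t = f (Function.update p i N') t := by
  classical
  have key : ∀ s, f p s ≠ f (Function.update p i N') s → s = s' := by
    intro s hs
    have w₁ : ∀ t, A t := Classical.arbitrary _
    have f1 := lemA hrichMin hdec hn hdecomp hg p i N' s hs w₁
    have f1' := lemA' hrichMin hdec hn hdecomp hg p i N' s hs w₁
    obtain ⟨hu, hvb⟩ := plus_flip hranks hoff f1 f1'
    by_contra hss
    have h1 := congrFun hu s
    rw [Function.update_self, Function.update_of_ne hss, Function.update_self] at h1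
    exact hs h1
  have hex : ∃ s, f p s ≠ f (Function.update p i N') s := by
    by_contra h; push_neg at h; exact hne (funext h)
  obtain ⟨s, hs⟩ := hex
  have hss := key s hs
  subst hss
  have w₁ : ∀ t, A t := Classical.arbitrary _
  have f1 := lemA hrichMin hdec hn hdecomp hg p i N' s hs w₁
  have f1' := lemA' hrichMin hdec hn hdecomp hg p i N' s hs w₁
  obtain ⟨hu, hvb⟩ := plus_flip hranks hoff f1 f1'
  rw [Function.update_self] at hvb
  have h1 := congrFun hu s
  rw [Function.update_self, Function.update_self] at h1
  refine ⟨h1, hvb, fun t ht => ?_⟩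
  by_contra hts
  exact ht (key t hts)
end MainB
section ListLemmas

variable {β : Type u}

theorem get_zero_of_head? {l : List β} {x : β} (h : l.head? = some x)
    (h0 : 0 < l.length) : l.get ⟨0, h0⟩ = x := by
  cases l with
  | nil => simp at h0
  | cons a t => simpa using h

theorem get_last_of_getLast? {l : List β} {x : β} (h : l.getLast? = some x)
    (hl : l.length - 1 < l.length) : l.get ⟨l.length - 1, hl⟩ = x := by
  have hne : l ≠ [] := by rintro rfl; simp at h
  have h2 : l.getLast hne = x := by
    rw [List.getLast?_eq_getLast hne] at h
    exact Option.some_injective _ h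
  rw [← h2]
  exact (List.getLast_eq_getElem hne).symm

theorem switch_forces_endpoints {l : List (Pref β)} {a b : β} (hab : a ≠ b)
    (hnr : ¬ HasRestoration l a b) {jj : ℕ} (hjj : jj + 1 < l.length)
    (hsw : ¬ ((l.get ⟨jj, by omega⟩).rel a b ↔ (l.get ⟨jj + 1, hjj⟩).rel a b))
    (h0 : 0 < l.length) :
    ¬ ((l.get ⟨0, h0⟩).rel a b ↔ (l.get ⟨l.length - 1, by omega⟩).rel a b) := by
  intro h0L
  have tot : ∀ (j : Fin l.length), ¬ (l.get j).rel a b → (l.get j).rel b a := by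
    intro j hj
    rcases (l.get j).total a b hab with h | h
    · exact absurd h hj
    · exact h
  by_cases hr0 : (l.get ⟨0, h0⟩).rel a b
  · have hrL : (l.get ⟨l.length - 1, by omega⟩).rel a b := h0L.mp hr0
    by_cases hrj : (l.get ⟨jj, by omega⟩).rel a b
    · have hrj1 : ¬ (l.get ⟨jj+1, hjj⟩).rel a b := fun hh =>
        hsw ⟨fun _ => hh, fun _ => hrj⟩
      have hlt : jj + 1 < l.length - 1 := by
        rcases Nat.lt_or_ge (jj+1) (l.length - 1) with h | h
        · exact h
        · exfalso
          apply hrj1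
          have he : jj + 1 = l.length - 1 := by omega
          rw [show (⟨jj+1, hjj⟩ : Fin l.length) = ⟨l.length - 1, by omega⟩ from by
            simp [he]]
          exact hrL
      exact hnr ⟨⟨jj, by omega⟩, ⟨jj+1, hjj⟩, ⟨l.length - 1, by omega⟩,
        Fin.mk_lt_mk.mpr (by omega), Fin.mk_lt_mk.mpr (by omega),
        Or.inl ⟨hrj, tot _ hrj1, hrL⟩⟩
    · have hrj1 : (l.get ⟨jj+1, hjj⟩).rel a b := by
        by_contra hh
        exact hsw ⟨fun h2 => absurd h2 hrj, fun h2 => absurd h2 hh⟩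
      have h0jj : 0 < jj := by
        rcases Nat.eq_zero_or_pos jj with h | h
        · exfalso
          apply hrj
          rw [show (⟨jj, by omega⟩ : Fin l.length) = ⟨0, h0⟩ from by simp [h]]
          exact hr0
        · exact h
      exact hnr ⟨⟨0, h0⟩, ⟨jj, by omega⟩, ⟨jj+1, hjj⟩,
        Fin.mk_lt_mk.mpr (by omega), Fin.mk_lt_mk.mpr (by omega),
        Or.inl ⟨hr0, tot _ hrj, hrj1⟩⟩
  · have hrL : ¬ (l.get ⟨l.length - 1, by omega⟩).rel a b := fun hh => hr0 (h0L.mpr hh)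
    by_cases hrj : (l.get ⟨jj, by omega⟩).rel a b
    · have hrj1 : ¬ (l.get ⟨jj+1, hjj⟩).rel a b := fun hh =>
        hsw ⟨fun _ => hh, fun _ => hrj⟩
      have h0jj : 0 < jj := by
        rcases Nat.eq_zero_or_pos jj with h | h
        · exfalso
          apply hr0
          rw [show (⟨0, h0⟩ : Fin l.length) = ⟨jj, by omega⟩ from by simp [h]]
          exact hrj
        · exact h
      exact hnr ⟨⟨0, h0⟩, ⟨jj, by omega⟩, ⟨jj+1, hjj⟩,
        Fin.mk_lt_mk.mpr (by omega), Fin.mk_lt_mk.mpr (by omega),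
        Or.inr ⟨tot _ hr0, hrj, tot _ hrj1⟩⟩
    · have hrj1 : (l.get ⟨jj+1, hjj⟩).rel a b := by
        by_contra hh
        exact hsw ⟨fun h2 => absurd h2 hrj, fun h2 => absurd h2 hh⟩
      have hlt : jj + 1 < l.length - 1 := by
        rcases Nat.lt_or_ge (jj+1) (l.length - 1) with h | h
        · exact h
        · exfalso
          apply hrL
          have he : jj + 1 = l.length - 1 := by omega
          rw [show (⟨l.length - 1, by omega⟩ : Fin l.length) = ⟨jj+1, hjj⟩ from by
            simp [he]]
          exact hrj1
      exact hnr ⟨⟨jj, by omega⟩, ⟨jj+1, hjj⟩, ⟨l.length - 1, by omega⟩,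
        Fin.mk_lt_mk.mpr (by omega), Fin.mk_lt_mk.mpr (by omega),
        Or.inr ⟨tot _ hrj, hrj1, tot _ hrL⟩⟩

end ListLemmas
section MainC

variable {m : ℕ} {A : Fin m → Type u} [∀ s, Fintype (A s)] [∀ s, Nonempty (A s)]
variable {D : Set (Pref (∀ s, A s))} {n : ℕ}
variable {f : (Fin n → D) → (∀ s, A s)}
variable {g : ∀ s : Fin m, (Fin n → (margDomain D s)) → A s}

set_option maxHeartbeats 1000000 in
theorem cross_lemma (hm : 2 ≤ m) (hcard : ∀ s, 2 ≤ Fintype.card (A s))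
    (hrichMin : MinimallyRich D) (hdec : DecomposableDomain D) (hn : 2 ≤ n)
    (hdecomp : Decomposable D f g)
    (hg : ∀ s, Unanimous (margDomain D s) (g s) ∧ StrategyProof (margDomain D s) (g s))
    {S S' : Pref (∀ s, A s)} (hS : S ∈ D) (hS' : S' ∈ D)
    {s' : Fin m} {γ δ : A s'} (hγδ : γ ≠ δ)
    (hranksB : ∀ z, S.rank (Function.update z s' δ) = S.rank (Function.update z s' γ) + 1 ∧
      S'.rank (Function.update z s' δ) = S.rank (Function.update z s' γ) ∧
      S'.rank (Function.update z s' γ) = S.rank (Function.update z s' γ) + 1)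
    (hoffB : ∀ c, c s' ≠ γ → c s' ≠ δ → S.rank c = S'.rank c)
    {i k : Fin n} (hik : i ≠ k)
    (r : Fin n → D) {x y : Pref (∀ s, A s)} (hx : x ∈ D) (hy : y ∈ D)
    (hedge : AdjEdge x y)
    (hσx : f (Function.update (Function.update r i ⟨S,hS⟩) k ⟨x,hx⟩) ≠
      f (Function.update (Function.update r i ⟨S',hS'⟩) k ⟨x,hx⟩))
    (hσy : f (Function.update (Function.update r i ⟨S,hS⟩) k ⟨y,hy⟩) =
      f (Function.update (Function.update r i ⟨S',hS'⟩) k ⟨y,hy⟩)) :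
    ∀ w, (x.rel (Function.update w s' γ) (Function.update w s' δ) ↔
      ¬ y.rel (Function.update w s' γ) (Function.update w s' δ)) := by
  classical
  set px : Fin n → D := Function.update (Function.update r i ⟨S,hS⟩) k ⟨x,hx⟩ with hpx
  set py : Fin n → D := Function.update (Function.update r i ⟨S,hS⟩) k ⟨y,hy⟩ with hpy
  set px' : Fin n → D := Function.update (Function.update r i ⟨S',hS'⟩) k ⟨x,hx⟩ with hpx'
  set py' : Fin n → D := Function.update (Function.update r i ⟨S',hS'⟩) k ⟨y,hy⟩ with hpy'
  have hpxi : px i = ⟨S, hS⟩ := by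
    rw [hpx, Function.update_of_ne hik, Function.update_self]
  have hpxk : px k = ⟨x, hx⟩ := by rw [hpx, Function.update_self]
  have hpx'k : px' k = ⟨x, hx⟩ := by rw [hpx', Function.update_self]
  have hpyeq : Function.update px k ⟨y,hy⟩ = py := by
    rw [hpx, hpy, Function.update_idem]
  have hpy'eq : Function.update px' k ⟨y,hy⟩ = py' := by
    rw [hpx', hpy', Function.update_idem]
  have hpx'' : Function.update px i ⟨S',hS'⟩ = px' := by
    rw [hpx, hpx', Function.update_comm hik.symm, Function.update_idem,
      ← Function.update_comm hik.symm]
  -- state form at x (σx is neq)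
  have HBx : f px s' = γ ∧ f px' s' = δ ∧ ∀ t, t ≠ s' → f px t = f px' t := by
    have h := edge_plus_form hrichMin hdec hn hdecomp hg px i ⟨S',hS'⟩ hγδ
      (by simp only [hpxi]; exact hranksB) (by simp only [hpxi]; exact hoffB)
      (by rw [hpx'']; exact hσx)
    rwa [hpx''] at h
  rcases hedge with hAdj | hPlus
  · -- adjacent edges host no changes
    exfalso
    have e1 : f px = f py := by
      have h := edge_adj_inert hm hcard hrichMin hdec hn hdecomp hg px k ⟨y,hy⟩
        (by simp only [hpxk]; exact hAdj)
      rwa [hpyeq] at h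
    have e2 : f px' = f py' := by
      have h := edge_adj_inert hm hcard hrichMin hdec hn hdecomp hg px' k ⟨y,hy⟩
        (by simp only [hpx'k]; exact hAdj)
      rwa [hpy'eq] at h
    exact hσx (e1.trans (hσy.trans e2.symm))
  · obtain ⟨hsepx, hsepy, se, ce, de, hcde, hranksE, hoffE⟩ := hPlus
    have jumpF : f px ≠ f py →
        f px se = ce ∧ f py se = de ∧ ∀ t, t ≠ se → f px t = f py t := by
      intro hne2
      have h := edge_plus_form hrichMin hdec hn hdecomp hg px k ⟨y,hy⟩ hcde
        (by simp only [hpxk]; exact hranksE) (by simp only [hpxk]; exact hoffE)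
        (by rw [hpyeq]; exact hne2)
      rwa [hpyeq] at h
    have jumpF' : f px' ≠ f py' →
        f px' se = ce ∧ f py' se = de ∧ ∀ t, t ≠ se → f px' t = f py' t := by
      intro hne2
      have h := edge_plus_form hrichMin hdec hn hdecomp hg px' k ⟨y,hy⟩ hcde
        (by simp only [hpx'k]; exact hranksE) (by simp only [hpx'k]; exact hoffE)
        (by rw [hpy'eq]; exact hne2)
      rwa [hpy'eq] at h
    by_cases hF : f px = f py
    · have hF' : f px' ≠ f py' := by
        intro h; exact hσx (hF.trans (hσy.trans h.symm))
      obtain ⟨hv1, hv2, hoffv⟩ := jumpF' hF'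
      have hse : se = s' := by
        by_contra hne'
        apply hγδ
        rw [← HBx.1, ← HBx.2.1]
        have h1 : f px' s' = f py' s' := hoffv s' (fun h => hne' h.symm)
        rw [h1, ← congrFun hσy s', ← congrFun hF s']
      subst hse
      have hce : ce = δ := by rw [← hv1, HBx.2.1]
      have hde : de = γ := by
        rw [← hv2, ← congrFun hσy se, ← congrFun hF se, HBx.1]
      intro w
      have hpr := plus_rel_pairs hranksE w
      rw [hce, hde] at hpr
      exact ⟨fun hxx => absurd hxx (x.asymm _ _ hpr.1), fun hny => absurd hpr.2 hny⟩
    · obtain ⟨hv1, hv2, hoffv⟩ := jumpF hF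
      by_cases hF' : f px' = f py'
      · have hse : se = s' := by
          by_contra hne'
          apply hγδ
          rw [← HBx.1, ← HBx.2.1]
          have h1 : f px s' = f py s' := hoffv s' (fun h => hne' h.symm)
          rw [h1, congrFun hσy s', ← congrFun hF' s']
        subst hse
        have hce : ce = γ := by rw [← hv1, HBx.1]
        have hde : de = δ := by
          rw [← hv2, congrFun hσy se, ← congrFun hF' se, HBx.2.1]
        intro w
        have hpr := plus_rel_pairs hranksE w
        rw [hce, hde] at hpr
        exact ⟨fun _ => y.asymm _ _ hpr.2, fun _ => hpr.1⟩
      · exfalso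
        obtain ⟨hw1, hw2, hoffw⟩ := jumpF' hF'
        by_cases hse : se = s'
        · subst hse
          exact hγδ (by rw [← HBx.1, hv1, ← hw1, HBx.2.1])
        · have h1 := hoffv s' (fun h => hse h.symm)
          have h2 := hoffw s' (fun h => hse h.symm)
          exact hγδ (by rw [← HBx.1, h1, congrFun hσy s', ← h2, HBx.2.1])

end MainC
section MainD

variable {m : ℕ} {A : Fin m → Type u} [∀ s, Fintype (A s)] [∀ s, Nonempty (A s)]
variable {D : Set (Pref (∀ s, A s))} {n : ℕ}
variable {f : (Fin n → D) → (∀ s, A s)}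
variable {g : ∀ s : Fin m, (Fin n → (margDomain D s)) → A s}

set_option maxHeartbeats 1000000 in
theorem track_lemma (hm : 2 ≤ m) (hcard : ∀ s, 2 ≤ Fintype.card (A s))
    (hrichMin : MinimallyRich D) (hdec : DecomposableDomain D) (hn : 2 ≤ n)
    (hdecomp : Decomposable D f g)
    (hg : ∀ s, Unanimous (margDomain D s) (g s) ∧ StrategyProof (margDomain D s) (g s))
    {S S' : Pref (∀ s, A s)} (hS : S ∈ D) (hS' : S' ∈ D)
    {s' : Fin m} {γ δ : A s'} (hγδ : γ ≠ δ)
    (hranksB : ∀ z, S.rank (Function.update z s' δ) = S.rank (Function.update z s' γ) + 1 ∧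
      S'.rank (Function.update z s' δ) = S.rank (Function.update z s' γ) ∧
      S'.rank (Function.update z s' γ) = S.rank (Function.update z s' γ) + 1)
    (hoffB : ∀ c, c s' ≠ γ → c s' ≠ δ → S.rank c = S'.rank c)
    {i k : Fin n} (hik : i ≠ k)
    (r : Fin n → D) (w₀ : ∀ t, A t)
    {T : Pref (∀ s, A s)} (hT : T ∈ D)
    {l : List (Pref (∀ s, A s))}
    (hpath : IsPath AdjEdge D (r k).1 T l)
    (hnr : ¬ HasRestoration l (Function.update w₀ s' γ) (Function.update w₀ s' δ))
    (hσ0 : f (Function.update r i ⟨S,hS⟩) ≠ f (Function.update r i ⟨S',hS'⟩))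
    (hσL : f (Function.update (Function.update r i ⟨S,hS⟩) k ⟨T,hT⟩) =
      f (Function.update (Function.update r i ⟨S',hS'⟩) k ⟨T,hT⟩)) :
    ((r k).1.rel (Function.update w₀ s' γ) (Function.update w₀ s' δ) ↔
      ¬ T.rel (Function.update w₀ s' γ) (Function.update w₀ s' δ)) := by
  classical
  obtain ⟨hlen, hnodup, hhead, hlastq, hmem, hchain⟩ := hpath
  have h0 : 0 < l.length := by omega
  have hlast : l.length - 1 < l.length := by omega
  have hget0 : l.get ⟨0, h0⟩ = (r k).1 := get_zero_of_head? hhead h0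
  have hgetL : l.get ⟨l.length - 1, hlast⟩ = T := get_last_of_getLast? hlastq hlast
  have memD : ∀ j : Fin l.length, l.get j ∈ D := fun j => hmem _ (l.get_mem _)
  set σ : Fin l.length → Prop := fun j =>
    f (Function.update (Function.update r i ⟨S,hS⟩) k ⟨l.get j, memD j⟩) ≠
    f (Function.update (Function.update r i ⟨S',hS'⟩) k ⟨l.get j, memD j⟩) with hσ
  have hσzero : σ ⟨0, h0⟩ := by
    show f (Function.update (Function.update r i ⟨S,hS⟩) k ⟨l.get ⟨0,h0⟩, memD ⟨0,h0⟩⟩) ≠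
      f (Function.update (Function.update r i ⟨S',hS'⟩) k ⟨l.get ⟨0,h0⟩, memD ⟨0,h0⟩⟩)
    have hsub : (⟨l.get ⟨0, h0⟩, memD ⟨0, h0⟩⟩ : D) = r k := Subtype.ext hget0
    rw [hsub]
    have e1 : Function.update (Function.update r i ⟨S,hS⟩) k (r k)
        = Function.update r i ⟨S,hS⟩ := by
      have : r k = (Function.update r i ⟨S,hS⟩) k := (Function.update_of_ne hik.symm _ _).symm
      rw [this, Function.update_eq_self]
    have e2 : Function.update (Function.update r i ⟨S',hS'⟩) k (r k)
        = Function.update r i ⟨S',hS'⟩ := by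
      have : r k = (Function.update r i ⟨S',hS'⟩) k := (Function.update_of_ne hik.symm _ _).symm
      rw [this, Function.update_eq_self]
    rw [e1, e2]
    exact hσ0
  have hσlast : ¬ σ ⟨l.length - 1, hlast⟩ := by
    show ¬ (f (Function.update (Function.update r i ⟨S,hS⟩) k
        ⟨l.get ⟨l.length - 1, hlast⟩, memD ⟨l.length - 1, hlast⟩⟩) ≠
      f (Function.update (Function.update r i ⟨S',hS'⟩) k
        ⟨l.get ⟨l.length - 1, hlast⟩, memD ⟨l.length - 1, hlast⟩⟩))
    have hsub : (⟨l.get ⟨l.length - 1, hlast⟩, memD ⟨l.length - 1, hlast⟩⟩ : D) = ⟨T, hT⟩ :=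
      Subtype.ext hgetL
    rw [hsub]
    exact fun hh => hh hσL
  have hcross : ∃ (jj : ℕ) (hjj : jj + 1 < l.length),
      ¬ (σ ⟨jj, by omega⟩ ↔ σ ⟨jj+1, hjj⟩) := by
    by_contra hno
    have hno' : ∀ (jj : ℕ) (hjj : jj + 1 < l.length), (σ ⟨jj, by omega⟩ ↔ σ ⟨jj+1, hjj⟩) := by
      intro jj hjj
      by_contra hh
      exact hno ⟨jj, hjj, hh⟩
    have hconst : ∀ j (hj : j < l.length), σ ⟨j, hj⟩ ↔ σ ⟨0, h0⟩ := by
      intro j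
      induction j with
      | zero => intro hj; exact Iff.rfl
      | succ jp ihp =>
        intro hj
        have hjp : jp < l.length := by omega
        exact (hno' jp hj).symm.trans (ihp hjp)
    exact hσlast ((hconst (l.length - 1) hlast).mpr hσzero)
  obtain ⟨jj, hjj, hsw⟩ := hcross
  have hedge : AdjEdge (l.get ⟨jj, by omega⟩) (l.get ⟨jj+1, hjj⟩) := by
    have := List.isChain_iff_getElem.mp hchain jj (by omega)
    exact this
  have hswitch : ¬ ((l.get ⟨jj, by omega⟩).rel (Function.update w₀ s' γ) (Function.update w₀ s' δ) ↔
      (l.get ⟨jj+1, hjj⟩).rel (Function.update w₀ s' γ) (Function.update w₀ s' δ)) := by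
    by_cases hσjj : σ ⟨jj, by omega⟩
    · have hσjj1 : ¬ σ ⟨jj+1, hjj⟩ := fun hh => hsw (iff_of_true hσjj hh)
      have hx1 : f (Function.update (Function.update r i ⟨S,hS⟩) k
            ⟨l.get ⟨jj, by omega⟩, memD ⟨jj, by omega⟩⟩) ≠
          f (Function.update (Function.update r i ⟨S',hS'⟩) k
            ⟨l.get ⟨jj, by omega⟩, memD ⟨jj, by omega⟩⟩) := hσjj
      have hy1 : f (Function.update (Function.update r i ⟨S,hS⟩) k
            ⟨l.get ⟨jj+1, hjj⟩, memD ⟨jj+1, hjj⟩⟩) =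
          f (Function.update (Function.update r i ⟨S',hS'⟩) k
            ⟨l.get ⟨jj+1, hjj⟩, memD ⟨jj+1, hjj⟩⟩) := not_not.mp hσjj1
      have hiff := cross_lemma hm hcard hrichMin hdec hn hdecomp hg hS hS' hγδ
        hranksB hoffB hik r (memD ⟨jj, by omega⟩) (memD ⟨jj+1, hjj⟩) hedge hx1 hy1 w₀
      tauto
    · have hσjj1 : σ ⟨jj+1, hjj⟩ := by
        by_contra hh
        exact hsw (iff_of_false hσjj (fun hs => hs hh))
      have hx1 : f (Function.update (Function.update r i ⟨S,hS⟩) k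
            ⟨l.get ⟨jj+1, hjj⟩, memD ⟨jj+1, hjj⟩⟩) ≠
          f (Function.update (Function.update r i ⟨S',hS'⟩) k
            ⟨l.get ⟨jj+1, hjj⟩, memD ⟨jj+1, hjj⟩⟩) := hσjj1
      have hy1 : f (Function.update (Function.update r i ⟨S,hS⟩) k
            ⟨l.get ⟨jj, by omega⟩, memD ⟨jj, by omega⟩⟩) =
          f (Function.update (Function.update r i ⟨S',hS'⟩) k
            ⟨l.get ⟨jj, by omega⟩, memD ⟨jj, by omega⟩⟩) := not_not.mp hσjj
      have hiff := cross_lemma hm hcard hrichMin hdec hn hdecomp hg hS hS' hγδ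
        hranksB hoffB hik r (memD ⟨jj+1, hjj⟩) (memD ⟨jj, by omega⟩) hedge.symm hx1 hy1 w₀
      tauto
  have hab : Function.update w₀ s' γ ≠ Function.update w₀ s' δ := by
    intro h
    have := congrFun h s'
    rw [Function.update_self, Function.update_self] at this
    exact hγδ this
  have hend := switch_forces_endpoints hab hnr hjj hswitch h0
  rw [hget0, hgetL] at hend
  tauto

set_option maxHeartbeats 1000000 in
theorem edge_plus_inert (hm : 2 ≤ m) (hcard : ∀ s, 2 ≤ Fintype.card (A s))
    (hrichMin : MinimallyRich D) (hExt : ExteriorPlus D)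
    (hdec : DecomposableDomain D) (hn : 2 ≤ n)
    (hdecomp : Decomposable D f g)
    (hg : ∀ s, Unanimous (margDomain D s) (g s) ∧ StrategyProof (margDomain D s) (g s))
    (hu : Unanimous D f)
    {S S' : Pref (∀ s, A s)} (hS : S ∈ D) (hS' : S' ∈ D)
    {s' : Fin m} {γ δ : A s'} (hγδ : γ ≠ δ)
    (hranksB : ∀ z, S.rank (Function.update z s' δ) = S.rank (Function.update z s' γ) + 1 ∧
      S'.rank (Function.update z s' δ) = S.rank (Function.update z s' γ) ∧
      S'.rank (Function.update z s' γ) = S.rank (Function.update z s' γ) + 1)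
    (hoffB : ∀ c, c s' ≠ γ → c s' ≠ δ → S.rank c = S'.rank c)
    (htop : Pref.top S = Pref.top S') :
    ∀ (i : Fin n) (r : Fin n → D),
      f (Function.update r i ⟨S,hS⟩) = f (Function.update r i ⟨S',hS'⟩) := by
  classical
  intro i
  set w₀ : ∀ t, A t := Classical.arbitrary _ with hw₀
  have hρ := plus_rel_pairs hranksB w₀
  have hrelS : S.rel (Function.update w₀ s' γ) (Function.update w₀ s' δ) := hρ.1
  have hrelS' : ¬ S'.rel (Function.update w₀ s' γ) (Function.update w₀ s' δ) :=
    S'.asymm _ _ hρ.2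
  set x0 := Pref.top S with hx0
  have hUnan : ∀ r : Fin n → D, (∀ kk, kk ≠ i → Pref.top (r kk).1 = x0) →
      f (Function.update r i ⟨S,hS⟩) = f (Function.update r i ⟨S',hS'⟩) := by
    intro r hall
    have h1 : f (Function.update r i ⟨S,hS⟩) = x0 := by
      apply hu _ x0
      intro j
      by_cases hj : j = i
      · subst hj; rw [Function.update_self]
      · rw [Function.update_of_ne hj]; exact hall j hj
    have h2 : f (Function.update r i ⟨S',hS'⟩) = x0 := by
      apply hu _ x0
      intro j
      by_cases hj : j = i
      · subst hj; rw [Function.update_self]; exact htop.symm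
      · rw [Function.update_of_ne hj]; exact hall j hj
    rw [h1, h2]
  suffices H : ∀ N (r : Fin n → D),
      (Finset.univ.filter (fun kk => kk ≠ i ∧ Pref.top (r kk).1 ≠ x0)).card ≤ N →
      f (Function.update r i ⟨S,hS⟩) = f (Function.update r i ⟨S',hS'⟩) by
    intro r
    exact H _ r le_rfl
  intro N
  induction N with
  | zero =>
    intro r hM
    apply hUnan
    intro kk hkk
    by_contra hk2
    have hmem : kk ∈ Finset.univ.filter (fun kk => kk ≠ i ∧ Pref.top (r kk).1 ≠ x0) :=
      Finset.mem_filter.mpr ⟨Finset.mem_univ _, hkk, hk2⟩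
    have := Finset.card_pos.mpr ⟨kk, hmem⟩
    omega
  | succ N ih =>
    intro r hM
    by_cases hM0 : (Finset.univ.filter (fun kk => kk ≠ i ∧ Pref.top (r kk).1 ≠ x0)).card = 0
    · apply hUnan
      intro kk hkk
      by_contra hk2
      have hmem : kk ∈ Finset.univ.filter (fun kk => kk ≠ i ∧ Pref.top (r kk).1 ≠ x0) :=
        Finset.mem_filter.mpr ⟨Finset.mem_univ _, hkk, hk2⟩
      have := Finset.card_pos.mpr ⟨kk, hmem⟩
      omega
    · by_contra hne
      obtain ⟨kk, hkkmem⟩ := Finset.card_pos.mp (Nat.pos_of_ne_zero hM0)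
      obtain ⟨-, hkki, hkktop⟩ := Finset.mem_filter.mp hkkmem
      have hikk : i ≠ kk := fun h => hkki h.symm
      -- measure decrease helper
      have hdecrease : ∀ (T : Pref (∀ s, A s)) (hT : T ∈ D), Pref.top T = x0 →
          (Finset.univ.filter (fun j => j ≠ i ∧
            Pref.top ((Function.update r kk ⟨T,hT⟩) j).1 ≠ x0)).card ≤ N := by
        intro T hT hTt
        have hsub : Finset.univ.filter (fun j => j ≠ i ∧
            Pref.top ((Function.update r kk ⟨T,hT⟩) j).1 ≠ x0) ⊆
            (Finset.univ.filter (fun j => j ≠ i ∧ Pref.top (r j).1 ≠ x0)).erase kk := by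
          intro j hj
          obtain ⟨-, hji, hjt⟩ := Finset.mem_filter.mp hj
          have hjkk : j ≠ kk := by
            intro h; subst h
            rw [Function.update_self] at hjt
            exact hjt hTt
          rw [Function.update_of_ne hjkk] at hjt
          exact Finset.mem_erase.mpr ⟨hjkk, Finset.mem_filter.mpr ⟨Finset.mem_univ _, hji, hjt⟩⟩
        have := Finset.card_le_card hsub
        rw [Finset.card_erase_of_mem hkkmem] at this
        omega
      -- end states are equal by the inductive hypothesis
      have hend : ∀ (T : Pref (∀ s, A s)) (hT : T ∈ D), Pref.top T = x0 →
          f (Function.update (Function.update r i ⟨S,hS⟩) kk ⟨T,hT⟩) =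
          f (Function.update (Function.update r i ⟨S',hS'⟩) kk ⟨T,hT⟩) := by
        intro T hT hTt
        have hcomm1 : Function.update (Function.update r i ⟨S,hS⟩) kk ⟨T,hT⟩
            = Function.update (Function.update r kk ⟨T,hT⟩) i ⟨S,hS⟩ :=
          Function.update_comm hikk _ _ _
        have hcomm2 : Function.update (Function.update r i ⟨S',hS'⟩) kk ⟨T,hT⟩
            = Function.update (Function.update r kk ⟨T,hT⟩) i ⟨S',hS'⟩ :=
          Function.update_comm hikk _ _ _
        rw [hcomm1, hcomm2]
        exact ih (Function.update r kk ⟨T,hT⟩) (hdecrease T hT hTt)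
      -- exterior paths to S and S'
      obtain ⟨l₁, hpath₁, hnr₁⟩ := (hExt (r kk).1 (r kk).2 S hS hkktop).1
        (Function.update w₀ s' γ) (Function.update w₀ s' δ)
      have hkktop' : Pref.top (r kk).1 ≠ Pref.top S' := by rw [← htop]; exact hkktop
      obtain ⟨l₂, hpath₂, hnr₂⟩ := (hExt (r kk).1 (r kk).2 S' hS' hkktop').1
        (Function.update w₀ s' γ) (Function.update w₀ s' δ)
      have t₁ := track_lemma hm hcard hrichMin hdec hn hdecomp hg hS hS' hγδ
        hranksB hoffB hikk r w₀ hS hpath₁ hnr₁ hne (hend S hS rfl)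
      have t₂ := track_lemma hm hcard hrichMin hdec hn hdecomp hg hS hS' hγδ
        hranksB hoffB hikk r w₀ hS' hpath₂ hnr₂ hne (hend S' hS' htop.symm)
      exact (t₁.mp (t₂.mpr hrelS')) hrelS

end MainD
section MainE

variable {m : ℕ} {A : Fin m → Type u} [∀ s, Fintype (A s)] [∀ s, Nonempty (A s)]
variable {D : Set (Pref (∀ s, A s))} {n : ℕ}
variable {f : (Fin n → D) → (∀ s, A s)}
variable {g : ∀ s : Fin m, (Fin n → (margDomain D s)) → A s}

theorem edge_inert (hm : 2 ≤ m) (hcard : ∀ s, 2 ≤ Fintype.card (A s))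
    (hrichMin : MinimallyRich D) (hExt : ExteriorPlus D)
    (hdec : DecomposableDomain D) (hn : 2 ≤ n)
    (hdecomp : Decomposable D f g)
    (hg : ∀ s, Unanimous (margDomain D s) (g s) ∧ StrategyProof (margDomain D s) (g s))
    (hu : Unanimous D f)
    {S S' : Pref (∀ s, A s)} (hS : S ∈ D) (hS' : S' ∈ D)
    (hedge : AdjEdge S S') (htop : Pref.top S = Pref.top S')
    (i : Fin n) (r : Fin n → D) :
    f (Function.update r i ⟨S,hS⟩) = f (Function.update r i ⟨S',hS'⟩) := by
  rcases hedge with hAdj | hPlus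
  · have h := edge_adj_inert hm hcard hrichMin hdec hn hdecomp hg
      (Function.update r i ⟨S,hS⟩) i ⟨S',hS'⟩
      (by simp only [Function.update_self]; exact hAdj)
    rwa [Function.update_idem] at h
  · obtain ⟨h1, h2, s', γ, δ, hγδ, hranksB, hoffB⟩ := hPlus
    exact edge_plus_inert hm hcard hrichMin hExt hdec hn hdecomp hg hu hS hS' hγδ
      (fun z => hranksB z) hoffB htop i r

theorem single_voter (hm : 2 ≤ m) (hcard : ∀ s, 2 ≤ Fintype.card (A s))
    (hrichMin : MinimallyRich D) (hInt : InteriorPlus D) (hExt : ExteriorPlus D)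
    (hdec : DecomposableDomain D) (hn : 2 ≤ n)
    (hdecomp : Decomposable D f g)
    (hg : ∀ s, Unanimous (margDomain D s) (g s) ∧ StrategyProof (margDomain D s) (g s))
    (hu : Unanimous D f)
    (q : Fin n → D) (i : Fin n) (N' : D) (htop : Pref.top (q i).1 = Pref.top N'.1) :
    f q = f (Function.update q i N') := by
  classical
  by_cases hval : q i = N'
  · rw [← hval, Function.update_eq_self]
  · have hne : (q i).1 ≠ N'.1 := fun h => hval (Subtype.ext h)
    obtain ⟨l, hpath, htopsl⟩ := hInt (q i).1 (q i).2 N'.1 N'.2 hne htop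
    obtain ⟨hlen, hnodup, hhead, hlastq, hmem, hchain⟩ := hpath
    have h0 : 0 < l.length := by omega
    have memD : ∀ (j : ℕ) (hj : j < l.length), l.get ⟨j, hj⟩ ∈ D :=
      fun j hj => hmem _ (l.get_mem _)
    have claim : ∀ (j : ℕ) (hj : j < l.length),
        f q = f (Function.update q i ⟨l.get ⟨j, hj⟩, memD j hj⟩) := by
      intro j
      induction j with
      | zero =>
        intro hj
        have hget0 : l.get ⟨0, hj⟩ = (q i).1 := get_zero_of_head? hhead hj
        have hsub : (⟨l.get ⟨0, hj⟩, memD 0 hj⟩ : D) = q i := Subtype.ext hget0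
        rw [hsub, Function.update_eq_self]
      | succ jp ihp =>
        intro hj
        have hjp : jp < l.length := by omega
        have hedge : AdjEdge (l.get ⟨jp, hjp⟩) (l.get ⟨jp+1, hj⟩) :=
          List.isChain_iff_getElem.mp hchain jp (by omega)
        have htop1 : Pref.top (l.get ⟨jp, hjp⟩) = Pref.top (l.get ⟨jp+1, hj⟩) := by
          rw [htopsl _ (l.get_mem _), htopsl _ (l.get_mem _)]
        exact (ihp hjp).trans
          (edge_inert hm hcard hrichMin hExt hdec hn hdecomp hg hu
            (memD jp hjp) (memD (jp+1) hj) hedge htop1 i q)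
    have hlastlt : l.length - 1 < l.length := by omega
    have hgetL := get_last_of_getLast? hlastq hlastlt
    have hres := claim (l.length - 1) hlastlt
    rwa [show (⟨l.get ⟨l.length - 1, hlastlt⟩, memD _ _⟩ : D) = N' from Subtype.ext hgetL]
      at hres

end MainE
/-- On a rich decomposable domain, every strategy-proof unanimous rule
satisfies the tops-only property. -/
theorem stmt_6 {m : ℕ} (hm : 2 ≤ m) {A : Fin m → Type u}
    [∀ s, Fintype (A s)] [∀ s, Nonempty (A s)]
    (hcard : ∀ s, 2 ≤ Fintype.card (A s))
    (D : Set (Pref (∀ s, A s)))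
    (hrich : RichDomain D)
    (hdec : DecomposableDomain D)
    (n : ℕ) (hn : 2 ≤ n)
    (f : (Fin n → D) → (∀ s, A s))
    (hu : Unanimous D f) (hsp : StrategyProof D f) :
    TopsOnly D f := by
  classical
  obtain ⟨hrichMin, hdiv, hInt, hExt⟩ := hrich
  obtain ⟨g, hdecomp, hg⟩ := (hdec n hn f).mp ⟨hu, hsp⟩
  intro p p' htops
  have step : ∀ K : ℕ, K ≤ n →
      f p = f (fun i : Fin n => if (i : ℕ) < K then p' i else p i) := by
    intro K
    induction K with
    | zero =>
      intro _
      exact congrArg f (funext fun i => (if_neg (Nat.not_lt_zero _)).symm)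
    | succ K ihK =>
      intro hK
      have hKn : K ≤ n := by omega
      have hKlt : K < n := by omega
      have hupd : (fun i : Fin n => if (i : ℕ) < K + 1 then p' i else p i)
          = Function.update (fun i : Fin n => if (i : ℕ) < K then p' i else p i)
            ⟨K, hKlt⟩ (p' ⟨K, hKlt⟩) := by
        funext j
        by_cases hj : j = (⟨K, hKlt⟩ : Fin n)
        · subst hj
          rw [Function.update_self, if_pos (show ((⟨K, hKlt⟩ : Fin n) : ℕ) < K + 1 from Nat.lt_succ_self K)]
        · rw [Function.update_of_ne hj]
          have hjK : (j : ℕ) ≠ K := fun h => hj (Fin.ext h)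
          by_cases h2 : (j : ℕ) < K
          · rw [if_pos (by omega), if_pos h2]
          · rw [if_neg (by omega), if_neg h2]
      rw [hupd]
      refine (ihK hKn).trans
        (single_voter hm hcard hrichMin hInt hExt hdec hn hdecomp hg hu _
          ⟨K, hKlt⟩ (p' ⟨K, hKlt⟩) ?_)
      have hv : (if ((⟨K, hKlt⟩ : Fin n) : ℕ) < K then p' ⟨K, hKlt⟩ else p ⟨K, hKlt⟩)
          = p ⟨K, hKlt⟩ := if_neg (show ¬ ((⟨K, hKlt⟩ : Fin n) : ℕ) < K from Nat.lt_irrefl K)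
      show Pref.top (if ((⟨K, hKlt⟩ : Fin n) : ℕ) < K then p' ⟨K, hKlt⟩
        else p ⟨K, hKlt⟩).1 = _
      rw [hv]
      exact htops ⟨K, hKlt⟩
  have hfin := step n le_rfl
  rwa [show (fun i : Fin n => if (i : ℕ) < n then p' i else p i) = p' from
    funext fun i => if_pos i.isLt] at hfin
end
end
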